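/- arXiv:2007.08654 — 4 statements merged into one kernel-verified Lean document; each statement's English description precedes it below -/
import Mathlib

section
/- Let n ≥ 1, 0 ≤ α < π/2, and let A ∈ Mₙ(ℂ) satisfy A ∈ S_α. Then cos(α)·‖A‖ ≤ w(A) ≤ ‖A‖. -/
open Matrix MeasureTheory
open scoped ComplexOrder

attribute [local instance] Matrix.normedAddCommGroup Matrix.normedSpace

/-- The numerical radius of a complex `n × n` matrix. -/
noncomputable def nradius {n : ℕ} (A : Matrix (Fin n) (Fin n) ℂ) : ℝ :=
  sSup {r : ℝ | ∃ x : EuclideanSpace ℂ (Fin n), ‖x‖ = 1 ∧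
    r = ‖(inner ℂ x (Matrix.toEuclideanCLM (𝕜 := ℂ) A x) : ℂ)‖}

/-- The operator (spectral) norm of a complex `n × n` matrix. -/
noncomputable def opNorm {n : ℕ} (A : Matrix (Fin n) (Fin n) ℂ) : ℝ :=
  ‖(Matrix.toEuclideanCLM (𝕜 := ℂ) A :
      EuclideanSpace ℂ (Fin n) →L[ℂ] EuclideanSpace ℂ (Fin n))‖

/-- The real part `(A + Aᴴ)/2` of a matrix. -/
noncomputable def matRe {n : ℕ} (A : Matrix (Fin n) (Fin n) ℂ) : Matrix (Fin n) (Fin n) ℂ :=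
  (1 / 2 : ℂ) • (A + Aᴴ)

/-- `A ∈ S_α` : `Re A` is positive definite and the numerical range of `A` lies in the
sector `{z : |Im z| ≤ tan α · Re z}`. -/
def InSector {n : ℕ} (α : ℝ) (A : Matrix (Fin n) (Fin n) ℂ) : Prop :=
  (matRe A).PosDef ∧ ∀ x : EuclideanSpace ℂ (Fin n), ‖x‖ = 1 →
    |(inner ℂ x (Matrix.toEuclideanCLM (𝕜 := ℂ) A x) : ℂ).im| ≤
      Real.tan α * ((inner ℂ x (Matrix.toEuclideanCLM (𝕜 := ℂ) A x) : ℂ)).re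

/-- The Euclidean inner product of `x` against `M x` as a dot product. -/
lemma inner_toEuclideanCLM {n : ℕ} (M : Matrix (Fin n) (Fin n) ℂ) (x : EuclideanSpace ℂ (Fin n)) :
    (inner ℂ x (Matrix.toEuclideanCLM (𝕜 := ℂ) M x) : ℂ)
      = dotProduct (star (WithLp.equiv 2 _ x)) (M *ᵥ (WithLp.equiv 2 _ x)) := by
  rw [PiLp.inner_apply]
  simp only [dotProduct, Pi.star_apply, ← Matrix.toLin'_apply, ← Matrix.ofLp_toEuclideanCLM]
  simp [Matrix.ofLp_toEuclideanCLM, Matrix.toLin'_apply, mul_comm]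

/-- Cauchy–Schwarz for an abstract positive semidefinite hermitian form. -/
lemma cs_aux {V : Type*} [AddCommGroup V] [Module ℂ V] (p : V → V → ℂ)
    (hherm : ∀ x y, p y x = (starRingEnd ℂ) (p x y))
    (hexp : ∀ x y (z : ℂ), p (x + z • y) (x + z • y) =
      p x x + (starRingEnd ℂ) z * p y x + z * p x y + (z * (starRingEnd ℂ) z) * p y y)
    (hpos : ∀ x, 0 ≤ (p x x).re) (x y : V) :
    ‖p x y‖ ^ 2 ≤ (p x x).re * (p y y).re := by
  by_cases hu : p x y = 0
  · simp only [hu, norm_zero]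
    simpa using mul_nonneg (hpos x) (hpos y)
  set u := p x y with hu'
  have habs : (0:ℝ) < ‖u‖ := norm_pos_iff.mpr hu
  have key : ∀ s : ℝ, 0 ≤ (p y y).re * (s * s) + (2 * ‖u‖) * s + (p x x).re := by
    intro s
    set z : ℂ := (s : ℂ) * (starRingEnd ℂ) u / (‖u‖ : ℂ) with hzdef
    have hzu : z * u = ((s * ‖u‖ : ℝ) : ℂ) := by
      rw [hzdef]
      field_simp
      rw [mul_assoc, Complex.conj_mul']
      push_cast
      ring
    have h1 : (starRingEnd ℂ) z * p y x + z * p x y = ((2 * s * ‖u‖ : ℝ) : ℂ) := by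
      rw [hherm x y, ← hu', ← _root_.map_mul (starRingEnd ℂ) z u, hzu, Complex.conj_ofReal]
      push_cast; ring
    have habz : ‖z‖ = |s| := by
      rw [hzdef, norm_div, norm_mul, Complex.norm_conj, Complex.norm_real,
        Complex.norm_real, norm_norm, Real.norm_eq_abs]
      field_simp
    have h2 : z * (starRingEnd ℂ) z = ((s * s : ℝ) : ℂ) := by
      rw [Complex.mul_conj, Complex.normSq_eq_norm_sq, habz]
      push_cast
      rw [← Complex.ofReal_pow, ← Complex.ofReal_mul, sq_abs]
      norm_cast
      ring
    have hp := hpos (x + z • y)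
    rw [hexp x y z] at hp
    rw [show p x x + (starRingEnd ℂ) z * p y x + z * p x y + z * (starRingEnd ℂ) z * p y y
        = p x x + ((starRingEnd ℂ) z * p y x + z * p x y) + ((s * s : ℝ) : ℂ) * p y y from by
      rw [h2]; ring] at hp
    rw [h1] at hp
    simp only [Complex.add_re, Complex.mul_re, Complex.ofReal_re, Complex.ofReal_im,
      zero_mul, sub_zero] at hp
    linarith
  have hd := discrim_le_zero key
  rw [discrim] at hd
  nlinarith [hd, habs]

/-- Hermitian symmetry of the `ν`-twisted form attached to a sesquilinear map. -/
lemma gform_herm {V : Type*} (s : V → V → ℂ) (ν : ℂ) (x y : V) :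
    ν * s y x + (starRingEnd ℂ) ν * (starRingEnd ℂ) (s x y)
      = (starRingEnd ℂ) (ν * s x y + (starRingEnd ℂ) ν * (starRingEnd ℂ) (s y x)) := by
  simp only [map_add, _root_.map_mul, Complex.conj_conj]
  ring

/-- Expansion of the `ν`-twisted form along `x + z • y`. -/
lemma gform_exp {V : Type*} [AddCommGroup V] [Module ℂ V] (s : V → V → ℂ)
    (hs : ∀ x y (z : ℂ), s (x + z • y) (x + z • y) =
      s x x + (starRingEnd ℂ) z * s y x + z * s x y + (z * (starRingEnd ℂ) z) * s y y)
    (ν : ℂ) (x y : V) (z : ℂ) :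
    ν * s (x + z • y) (x + z • y)
        + (starRingEnd ℂ) ν * (starRingEnd ℂ) (s (x + z • y) (x + z • y))
      = (ν * s x x + (starRingEnd ℂ) ν * (starRingEnd ℂ) (s x x))
        + (starRingEnd ℂ) z * (ν * s y x + (starRingEnd ℂ) ν * (starRingEnd ℂ) (s x y))
        + z * (ν * s x y + (starRingEnd ℂ) ν * (starRingEnd ℂ) (s y x))
        + (z * (starRingEnd ℂ) z)
            * (ν * s y y + (starRingEnd ℂ) ν * (starRingEnd ℂ) (s y y)) := by
  rw [hs x y z]
  simp only [map_add, _root_.map_mul, Complex.conj_conj]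
  ring

/-- Elementary real inequality: a Cauchy–Schwarz-type bound for sums. -/
lemma sum_sq_le {π κ a b c d : ℝ} (hπ : 0 ≤ π) (hκ : 0 ≤ κ) (ha : 0 ≤ a) (hb : 0 ≤ b)
    (hc : 0 ≤ c) (hd : 0 ≤ d) (h1 : π ^ 2 ≤ a * c) (h2 : κ ^ 2 ≤ b * d) :
    (π + κ) ^ 2 ≤ (a + b) * (c + d) := by
  have h3 : π * κ ≤ (a * d + b * c) / 2 := by
    nlinarith [sq_nonneg (a * d - b * c), mul_nonneg hπ hκ, sq_nonneg (π * κ),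
      mul_nonneg (mul_nonneg ha hd) (mul_nonneg hb hc), mul_le_mul h1 h2 (sq_nonneg κ)
        (mul_nonneg ha hc), mul_nonneg ha hd, mul_nonneg hb hc]
  nlinarith

/-- The key sector bound, positive-angle case. -/
lemma key_pos {V : Type*} [AddCommGroup V] [Module ℂ V] (s : V → V → ℂ)
    (hs : ∀ x y (z : ℂ), s (x + z • y) (x + z • y) =
      s x x + (starRingEnd ℂ) z * s y x + z * s x y + (z * (starRingEnd ℂ) z) * s y y)
    {t : ℝ} (ht : 0 < t)
    (hsec : ∀ v, |(s v v).im| ≤ t * (s v v).re)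
    (x y : V) :
    ‖s y x‖ ^ 2 ≤ (1 + t ^ 2) * ((s x x).re * (s y y).re) := by
  set μ : ℂ := ((t : ℂ) - Complex.I) / 2 with hμ
  set ν : ℂ := ((t : ℂ) + Complex.I) / 2 with hν
  have hμconj : (starRingEnd ℂ) μ = ν := by
    rw [hμ, hν]
    simp [map_div₀, Complex.conj_I, Complex.conj_ofReal, map_ofNat]
  have hνconj : (starRingEnd ℂ) ν = μ := by
    rw [← hμconj, Complex.conj_conj]
  -- real parts of the two twisted forms
  have hreμ : ∀ w : ℂ, (μ * w + (starRingEnd ℂ) μ * (starRingEnd ℂ) w).re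
      = t * w.re + w.im := by
    intro w
    rw [hμconj, hν, hμ]
    simp [Complex.add_re, Complex.mul_re, Complex.div_re, Complex.div_im, Complex.normSq,
      Complex.sub_re, Complex.sub_im, Complex.mul_im]
    ring
  have hreν : ∀ w : ℂ, (ν * w + (starRingEnd ℂ) ν * (starRingEnd ℂ) w).re
      = t * w.re - w.im := by
    intro w
    rw [hνconj, hν, hμ]
    simp [Complex.add_re, Complex.mul_re, Complex.div_re, Complex.div_im, Complex.normSq,
      Complex.sub_re, Complex.sub_im, Complex.mul_im, Complex.add_im]
    ring
  have hposμ : ∀ v, 0 ≤ ((fun a b => μ * s a b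
      + (starRingEnd ℂ) μ * (starRingEnd ℂ) (s b a)) v v).re := by
    intro v
    simp only
    rw [hreμ]
    have := abs_le.mp (hsec v)
    linarith [this.1]
  have hposν : ∀ v, 0 ≤ ((fun a b => ν * s a b
      + (starRingEnd ℂ) ν * (starRingEnd ℂ) (s b a)) v v).re := by
    intro v
    simp only
    rw [hreν]
    have := abs_le.mp (hsec v)
    linarith [this.2]
  have hp := cs_aux (fun a b => μ * s a b + (starRingEnd ℂ) μ * (starRingEnd ℂ) (s b a))
    (fun a b => gform_herm s μ a b) (fun a b z => gform_exp s hs μ a b z) hposμ y x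
  have hq := cs_aux (fun a b => ν * s a b + (starRingEnd ℂ) ν * (starRingEnd ℂ) (s b a))
    (fun a b => gform_herm s ν a b) (fun a b z => gform_exp s hs ν a b z) hposν y x
  rw [hreμ, hreμ] at hp
  rw [hreν, hreν] at hq
  -- notation
  set Rx : ℝ := (s x x).re
  set Ry : ℝ := (s y y).re
  set Mx : ℝ := (s x x).im
  set My : ℝ := (s y y).im
  set P : ℂ := μ * s y x + (starRingEnd ℂ) μ * (starRingEnd ℂ) (s x y) with hP
  set Q : ℂ := ν * s y x + (starRingEnd ℂ) ν * (starRingEnd ℂ) (s x y) with hQ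
  -- linear combination recovering s y x
  have hcomb : 2 * (t : ℂ) * s y x
      = (1 + (t : ℂ) * Complex.I) * P + (1 - (t : ℂ) * Complex.I) * Q := by
    rw [hP, hQ, hμconj, hνconj, hμ, hν]
    linear_combination ((t : ℂ) * (s y x - (starRingEnd ℂ) (s x y))) * Complex.I_sq
  set K : ℝ := ‖1 + (t : ℂ) * Complex.I‖ with hK
  have hK2 : K ^ 2 = 1 + t ^ 2 := by
    rw [hK, Complex.sq_norm, Complex.normSq_apply]
    simp
    ring
  have hK' : ‖1 - (t : ℂ) * Complex.I‖ = K := by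
    rw [show (1 - (t : ℂ) * Complex.I) = (starRingEnd ℂ) (1 + (t : ℂ) * Complex.I) by
      simp [Complex.conj_I, Complex.conj_ofReal]; ring]
    exact Complex.norm_conj _
  have h5 : 2 * t * ‖s y x‖ ≤ K * (‖P‖ + ‖Q‖) := by
    have e1 : ‖2 * (t : ℂ) * s y x‖ = 2 * t * ‖s y x‖ := by
      rw [norm_mul, norm_mul]
      simp [abs_of_pos ht]
    rw [← e1, hcomb]
    calc ‖(1 + (t : ℂ) * Complex.I) * P + (1 - (t : ℂ) * Complex.I) * Q‖
        ≤ ‖(1 + (t : ℂ) * Complex.I) * P‖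
          + ‖(1 - (t : ℂ) * Complex.I) * Q‖ := norm_add_le _ _
      _ = K * ‖P‖ + K * ‖Q‖ := by rw [norm_mul, norm_mul, hK', ← hK]
      _ = K * (‖P‖ + ‖Q‖) := by ring
  have hsum : (‖P‖ + ‖Q‖) ^ 2 ≤ (2 * t * Ry) * (2 * t * Rx) := by
    have := sum_sq_le (norm_nonneg P) (norm_nonneg Q)
      (a := t * Ry + My) (b := t * Ry - My) (c := t * Rx + Mx) (d := t * Rx - Mx)
      ?_ ?_ ?_ ?_ hp hq
    · calc (‖P‖ + ‖Q‖) ^ 2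
          ≤ ((t * Ry + My) + (t * Ry - My)) * ((t * Rx + Mx) + (t * Rx - Mx)) := this
        _ = (2 * t * Ry) * (2 * t * Rx) := by ring
    · have := abs_le.mp (hsec y); linarith [this.1]
    · have := abs_le.mp (hsec y); linarith [this.2]
    · have := abs_le.mp (hsec x); linarith [this.1]
    · have := abs_le.mp (hsec x); linarith [this.2]
  have h6 : (2 * t * ‖s y x‖) ^ 2 ≤ (K * (‖P‖ + ‖Q‖)) ^ 2 :=
    pow_le_pow_left₀ (by positivity) h5 2
  have hKnn : 0 ≤ K := norm_nonneg _
  nlinarith [h6, hsum, hK2, mul_pos ht ht, sq_nonneg (‖P‖ + ‖Q‖),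
    norm_nonneg (s y x), mul_pos (mul_pos ht ht) (mul_pos ht ht)]

/-- The key sector bound. -/
lemma key_aux {V : Type*} [AddCommGroup V] [Module ℂ V] (s : V → V → ℂ)
    (hs : ∀ x y (z : ℂ), s (x + z • y) (x + z • y) =
      s x x + (starRingEnd ℂ) z * s y x + z * s x y + (z * (starRingEnd ℂ) z) * s y y)
    {t : ℝ} (ht : 0 ≤ t)
    (hsec : ∀ v, |(s v v).im| ≤ t * (s v v).re) (hpos : ∀ v, 0 ≤ (s v v).re)
    (x y : V) :
    ‖s y x‖ ^ 2 ≤ (1 + t ^ 2) * ((s x x).re * (s y y).re) := by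
  have hall : ∀ t' : ℝ, t < t' → ‖s y x‖ ^ 2
      ≤ (1 + t' ^ 2) * ((s x x).re * (s y y).re) := by
    intro t' ht'
    refine key_pos s hs (lt_of_le_of_lt ht ht') (fun v => ?_) x y
    calc |(s v v).im| ≤ t * (s v v).re := hsec v
      _ ≤ t' * (s v v).re := mul_le_mul_of_nonneg_right (le_of_lt ht') (hpos v)
  rcases lt_or_eq_of_le ht with htpos | ht0
  · exact key_pos s hs htpos hsec x y
  · -- t = 0
    rw [← ht0]
    have hRR : 0 ≤ (s x x).re * (s y y).re := mul_nonneg (hpos x) (hpos y)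
    rcases eq_or_lt_of_le hRR with hRR0 | hRRpos
    · have := hall 1 (by rw [← ht0]; norm_num)
      rw [← hRR0] at this ⊢
      simpa using this
    · by_contra hcon
      push_neg at hcon
      rw [← ht0] at hall
      set ε : ℝ := ‖s y x‖ ^ 2 - (s x x).re * (s y y).re with hε
      have hεpos : 0 < ε := by simp only [hε]; nlinarith [hcon]
      set t' : ℝ := Real.sqrt (ε / (2 * ((s x x).re * (s y y).re))) with ht'
      have ht'pos : 0 < t' := Real.sqrt_pos.mpr (by positivity)
      have ht'sq : t' ^ 2 = ε / (2 * ((s x x).re * (s y y).re)) := by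
        rw [ht', Real.sq_sqrt (by positivity)]
      have := hall t' ht'pos
      rw [ht'sq] at this
      have hh : (1 + ε / (2 * ((s x x).re * (s y y).re))) * ((s x x).re * (s y y).re)
          = (s x x).re * (s y y).re + ε / 2 := by
        rw [add_mul, one_mul, div_mul_eq_mul_div, mul_div_mul_right _ _ hRRpos.ne']
      rw [hh] at this
      simp only [hε] at this
      nlinarith [this, hεpos]

set_option maxHeartbeats 1000000 in
theorem stmt0 {n : ℕ} (hn : 1 ≤ n) {α : ℝ} (hα0 : 0 ≤ α) (hα : α < Real.pi / 2)
    {A : Matrix (Fin n) (Fin n) ℂ} (hA : InSector α A) :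
    Real.cos α * opNorm A ≤ nradius A ∧ nradius A ≤ opNorm A := by
  classical
  have hπ := Real.pi_pos
  have hcos : 0 < Real.cos α := Real.cos_pos_of_mem_Ioo ⟨by linarith, hα⟩
  set t : ℝ := Real.tan α with htdef
  have ht0 : 0 ≤ t := Real.tan_nonneg_of_nonneg_of_le_pi_div_two hα0 hα.le
  set T : EuclideanSpace ℂ (Fin n) →L[ℂ] EuclideanSpace ℂ (Fin n)
    := Matrix.toEuclideanCLM (𝕜 := ℂ) A with hT
  set s : EuclideanSpace ℂ (Fin n) → EuclideanSpace ℂ (Fin n) → ℂ :=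
    fun x y => (inner ℂ x (T y) : ℂ) with hsdef
  have hop : opNorm A = ‖T‖ := rfl
  -- sesquilinear expansion
  have hs : ∀ x y (z : ℂ), s (x + z • y) (x + z • y) =
      s x x + (starRingEnd ℂ) z * s y x + z * s x y + (z * (starRingEnd ℂ) z) * s y y := by
    intro x y z
    simp only [hsdef, map_add, ContinuousLinearMap.map_smul, inner_add_left, inner_add_right,
      inner_smul_left, inner_smul_right, smul_eq_mul]
    ring
  -- scaling
  have hscale : ∀ (r : ℝ) (x : EuclideanSpace ℂ (Fin n)),
      s (((r : ℂ)) • x) (((r : ℂ)) • x) = ((r ^ 2 : ℝ) : ℂ) * s x x := by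
    intro r x
    simp only [hsdef, ContinuousLinearMap.map_smul, inner_smul_left, inner_smul_right,
      Complex.conj_ofReal, smul_eq_mul]
    push_cast
    ring
  -- the numerical radius set
  set S : Set ℝ := {r : ℝ | ∃ x : EuclideanSpace ℂ (Fin n), ‖x‖ = 1 ∧
    r = ‖(inner ℂ x (T x) : ℂ)‖} with hSdef
  have hnr : nradius A = sSup S := rfl
  set x₀ : EuclideanSpace ℂ (Fin n) := EuclideanSpace.single (⟨0, hn⟩ : Fin n) (1 : ℂ) with hx₀def
  have hx₀ : ‖x₀‖ = 1 := by
    rw [hx₀def, EuclideanSpace.norm_single]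
    simp
  have hne : S.Nonempty := ⟨_, x₀, hx₀, rfl⟩
  have hbdd : BddAbove S := by
    refine ⟨‖T‖, ?_⟩
    rintro r ⟨x, hx, rfl⟩
    calc ‖(inner ℂ x (T x) : ℂ)‖ ≤ ‖x‖ * ‖T x‖ := norm_inner_le_norm _ _
      _ ≤ ‖x‖ * (‖T‖ * ‖x‖) := by
          have := T.le_opNorm x
          have hx0 : (0:ℝ) ≤ ‖x‖ := norm_nonneg _
          nlinarith
      _ = ‖T‖ := by rw [hx]; ring
  have hwle : nradius A ≤ opNorm A := by
    rw [hnr, hop]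
    refine csSup_le hne ?_
    rintro r ⟨x, hx, rfl⟩
    calc ‖(inner ℂ x (T x) : ℂ)‖ ≤ ‖x‖ * ‖T x‖ := norm_inner_le_norm _ _
      _ ≤ ‖x‖ * (‖T‖ * ‖x‖) := by
          have := T.le_opNorm x
          have hx0 : (0:ℝ) ≤ ‖x‖ := norm_nonneg _
          nlinarith
      _ = ‖T‖ := by rw [hx]; ring
  have hmem : ∀ u : EuclideanSpace ℂ (Fin n), ‖u‖ = 1 →
      ‖(inner ℂ u (T u) : ℂ)‖ ≤ nradius A := by
    intro u hu
    rw [hnr]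
    exact le_csSup hbdd ⟨u, hu, rfl⟩
  have hw0 : 0 ≤ nradius A := le_trans (norm_nonneg _) (hmem x₀ hx₀)
  -- upper bound of the quadratic form by the numerical radius
  have hub : ∀ x : EuclideanSpace ℂ (Fin n), ‖s x x‖ ≤ nradius A * ‖x‖ ^ 2 := by
    intro x
    rcases eq_or_ne x 0 with rfl | hx
    · simp [hsdef]
    · have hnx : (0:ℝ) < ‖x‖ := norm_pos_iff.mpr hx
      set u : EuclideanSpace ℂ (Fin n) := ((‖x‖⁻¹ : ℝ) : ℂ) • x with hudef
      have hu : ‖u‖ = 1 := by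
        rw [hudef, norm_smul]
        simp [abs_of_pos (inv_pos.mpr hnx)]
        field_simp
      have h1 : ‖(inner ℂ u (T u) : ℂ)‖ ≤ nradius A := hmem u hu
      have h2 : (inner ℂ u (T u) : ℂ) = (((‖x‖⁻¹) ^ 2 : ℝ) : ℂ) * s x x := hscale _ x
      rw [h2] at h1
      rw [norm_mul, Complex.norm_real, Real.norm_eq_abs,
        abs_of_pos (by positivity : (0:ℝ) < (‖x‖⁻¹) ^ 2)] at h1
      have hx2 : (0:ℝ) < ‖x‖ ^ 2 := by positivity
      calc ‖s x x‖ = (‖x‖ ^ 2) * ((‖x‖⁻¹) ^ 2 * ‖s x x‖) := by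
            field_simp
        _ ≤ (‖x‖ ^ 2) * nradius A := by nlinarith
        _ = nradius A * ‖x‖ ^ 2 := by ring
  -- sector condition for all vectors
  have hsec : ∀ v : EuclideanSpace ℂ (Fin n), |(s v v).im| ≤ t * (s v v).re := by
    intro v
    rcases eq_or_ne v 0 with rfl | hv
    · simp [hsdef]
    · have hnv : (0:ℝ) < ‖v‖ := norm_pos_iff.mpr hv
      set u : EuclideanSpace ℂ (Fin n) := ((‖v‖⁻¹ : ℝ) : ℂ) • v with hudef
      have hu : ‖u‖ = 1 := by
        rw [hudef, norm_smul]
        simp [abs_of_pos (inv_pos.mpr hnv)]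
        field_simp
      have h1 := hA.2 u hu
      have h2 : (inner ℂ u (T u) : ℂ) = (((‖v‖⁻¹) ^ 2 : ℝ) : ℂ) * s v v := hscale _ v
      rw [h2] at h1
      simp only [Complex.mul_im, Complex.mul_re, Complex.ofReal_re, Complex.ofReal_im,
        zero_mul, mul_zero, sub_zero, add_zero, zero_add] at h1
      rw [abs_mul, abs_of_pos (by positivity : (0:ℝ) < (‖v‖⁻¹) ^ 2)] at h1
      have hv2 : (0:ℝ) < (‖v‖⁻¹) ^ 2 := by positivity
      calc |(s v v).im| = (‖v‖ ^ 2) * ((‖v‖⁻¹) ^ 2 * |(s v v).im|) := by field_simp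
        _ ≤ (‖v‖ ^ 2) * (t * ((‖v‖⁻¹) ^ 2 * (s v v).re)) := by
            have hw2 : (0:ℝ) ≤ ‖v‖ ^ 2 := by positivity
            exact mul_le_mul_of_nonneg_left h1 hw2
        _ = t * (s v v).re := by field_simp
  -- positivity of the real part from positive definiteness
  have hpos : ∀ v : EuclideanSpace ℂ (Fin n), 0 ≤ (s v v).re := by
    intro v
    rcases eq_or_ne v 0 with rfl | hv
    · simp [hsdef]
    · -- translate to dot product
      have hmre : Matrix.toEuclideanCLM (𝕜 := ℂ) (matRe A)
          = (1/2 : ℂ) • (T + ContinuousLinearMap.adjoint T) := by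
        rw [matRe, _root_.map_smul, _root_.map_add]
        rw [show Aᴴ = star A from rfl, StarHomClass.map_star, ContinuousLinearMap.star_eq_adjoint, hT]
      have hinner : (inner ℂ v (Matrix.toEuclideanCLM (𝕜 := ℂ) (matRe A) v) : ℂ)
          = (((s v v).re : ℝ) : ℂ) := by
        rw [hmre]
        simp only [ContinuousLinearMap.smul_apply, ContinuousLinearMap.add_apply,
          inner_smul_right, inner_add_right, ContinuousLinearMap.adjoint_inner_right]
        rw [show (inner ℂ (T v) v : ℂ) = (starRingEnd ℂ) (inner ℂ v (T v) : ℂ) from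
          (inner_conj_symm _ _).symm]
        rw [show (inner ℂ v (T v) : ℂ) = s v v from rfl, Complex.add_conj]
        push_cast
        ring
      have hdot := inner_toEuclideanCLM (matRe A) v
      have hv' : (WithLp.equiv 2 (Fin n → ℂ)) v ≠ 0 := by
        intro h
        exact hv ((WithLp.equiv 2 (Fin n → ℂ)).injective (by simpa using h))
      have hpd := hA.1.dotProduct_mulVec_pos hv'
      rw [← hdot, hinner] at hpd
      exact le_of_lt (Complex.zero_lt_real.mp hpd)
  -- the key inequality
  have hkey := key_aux s hs ht0 hsec hpos
  -- operator norm bound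
  have hTle : ‖T‖ ≤ (Real.cos α)⁻¹ * nradius A := by
    refine ContinuousLinearMap.opNorm_le_bound _ (by positivity) (fun x => ?_)
    rcases eq_or_ne (T x) 0 with hTx | hTx
    · rw [hTx]
      simp
      positivity
    · have hk := hkey x (T x)
      have h7 : s (T x) x = ((‖T x‖ : ℂ)) ^ 2 := inner_self_eq_norm_sq_to_K (𝕜 := ℂ) (T x)
      have h7' : ‖s (T x) x‖ = ‖T x‖ ^ 2 := by
        rw [h7, norm_pow, Complex.norm_real, norm_norm]
      rw [h7'] at hk
      have ha : (0:ℝ) < ‖T x‖ := norm_pos_iff.mpr hTx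
      have hrx : (s x x).re ≤ nradius A * ‖x‖ ^ 2 :=
        le_trans (Complex.re_le_norm _) (hub x)
      have hrtx : (s (T x) (T x)).re ≤ nradius A * ‖T x‖ ^ 2 :=
        le_trans (Complex.re_le_norm _) (hub (T x))
      have hrx0 : 0 ≤ (s x x).re := hpos x
      have hrtx0 : 0 ≤ (s (T x) (T x)).re := hpos (T x)
      have hC2 : 1 + t ^ 2 = ((Real.cos α)⁻¹) ^ 2 := by
        have h := Real.inv_one_add_tan_sq (ne_of_gt hcos)
        rw [htdef, inv_pow, ← h, inv_inv]
      have h1t : (0:ℝ) ≤ 1 + t ^ 2 := by positivity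
      -- combine
      have hmain : (‖T x‖ ^ 2) ^ 2 ≤ (1 + t ^ 2) * ((nradius A * ‖x‖ ^ 2) * (nradius A * ‖T x‖ ^ 2)) := by
        calc (‖T x‖ ^ 2) ^ 2 ≤ (1 + t ^ 2) * ((s x x).re * (s (T x) (T x)).re) := hk
          _ ≤ (1 + t ^ 2) * ((nradius A * ‖x‖ ^ 2) * (nradius A * ‖T x‖ ^ 2)) := by
              have h9 := mul_le_mul hrx hrtx hrtx0 (by positivity)
              exact mul_le_mul_of_nonneg_left h9 h1t
      rw [hC2] at hmain
      have h10 : ‖T x‖ ^ 2 ≤ ((Real.cos α)⁻¹ * nradius A * ‖x‖) ^ 2 := by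
        nlinarith [hmain, mul_pos ha ha]
      have h11 := Real.sqrt_le_sqrt h10
      rw [Real.sqrt_sq ha.le, Real.sqrt_sq (by positivity)] at h11
      exact h11
  refine ⟨?_, hwle⟩
  rw [hop]
  calc Real.cos α * ‖T‖ ≤ Real.cos α * ((Real.cos α)⁻¹ * nradius A) :=
        mul_le_mul_of_nonneg_left hTle hcos.le
    _ = nradius A := by field_simp
end

section
/- Let n ≥ 1, 0 ≤ α < π/2, and let A ∈ Mₙ(ℂ) satisfy A ∈ S_α. Then cos(α)³·w(A)⁻¹ ≤ w(A⁻¹). -/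
open Matrix MeasureTheory
open scoped ComplexOrder

attribute [local instance] Matrix.normedAddCommGroup Matrix.normedSpace

/- ## Auxiliary lemmas -/

lemma rclike_ofReal_complex (a : ℝ) : (RCLike.ofReal a : ℂ) = Complex.ofReal a := rfl

/-- Polarization-type bound: a symmetric operator whose quadratic form is bounded by `c ‖x‖²`
has norm at most `c ‖x‖` pointwise. -/
lemma selfadj_quad_norm_bound {E : Type*} [NormedAddCommGroup E] [InnerProductSpace ℂ E]
    (S : E →L[ℂ] E) (hS : ∀ x y : E, (inner ℂ (S x) y : ℂ) = inner ℂ x (S y))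
    {c : ℝ} (hc : 0 ≤ c) (hb : ∀ x : E, ‖(inner ℂ x (S x) : ℂ)‖ ≤ c * ‖x‖ ^ 2) (x : E) :
    ‖S x‖ ≤ c * ‖x‖ := by
  rcases eq_or_ne (S x) 0 with h0 | h0
  · rw [h0, norm_zero]; positivity
  have hx : x ≠ 0 := by rintro rfl; simp at h0
  have hxn : (0:ℝ) < ‖x‖ := norm_pos_iff.mpr hx
  have hSxn : (0:ℝ) < ‖S x‖ := norm_pos_iff.mpr h0
  set r : ℝ := ‖x‖ / ‖S x‖ with hr
  set v : E := (r : ℂ) • S x with hv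
  have hvn : ‖v‖ = ‖x‖ := by
    rw [hv, norm_smul]
    simp only [Complex.norm_real, Real.norm_eq_abs, hr]
    rw [abs_of_pos (by positivity)]
    field_simp
  have ht : (inner ℂ v (S x) : ℂ) = ((r * (‖S x‖^2) : ℝ) : ℂ) := by
    rw [hv, inner_smul_left, inner_self_eq_norm_sq_to_K]
    simp only [Complex.conj_ofReal, rclike_ofReal_complex]
    push_cast
    ring
  have key : (inner ℂ (x+v) (S (x+v)) : ℂ) - inner ℂ (x-v) (S (x-v))
      = 2 * ((inner ℂ x (S v) : ℂ) + inner ℂ v (S x)) := by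
    rw [map_add, map_sub]
    simp only [inner_add_left, inner_add_right, inner_sub_left, inner_sub_right]
    ring
  have hconj : (inner ℂ x (S v) : ℂ) = (starRingEnd ℂ) (inner ℂ v (S x)) := by
    rw [← hS x v, inner_conj_symm]
  have key2 : (inner ℂ (x+v) (S (x+v)) : ℂ) - inner ℂ (x-v) (S (x-v))
      = ((4 * (r * ‖S x‖^2) : ℝ) : ℂ) := by
    rw [key, hconj, ht]
    simp [Complex.conj_ofReal]
    push_cast
    ring
  have hre : 4 * (r * ‖S x‖^2)
      ≤ ‖(inner ℂ (x+v) (S (x+v)) : ℂ)‖ + ‖(inner ℂ (x-v) (S (x-v)) : ℂ)‖ := by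
    have := congrArg Complex.re key2
    simp only [Complex.sub_re, Complex.ofReal_re] at this
    have h1 := Complex.abs_re_le_norm (inner ℂ (x+v) (S (x+v)) : ℂ)
    have h2 := Complex.abs_re_le_norm (inner ℂ (x-v) (S (x-v)) : ℂ)
    have h1' := (le_abs_self ((inner ℂ (x+v) (S (x+v)) : ℂ)).re).trans h1
    have h2' := (neg_le_abs ((inner ℂ (x-v) (S (x-v)) : ℂ)).re).trans h2
    linarith
  have hpar : ‖x+v‖^2 + ‖x-v‖^2 = 2 * (‖x‖^2 + ‖v‖^2) := by
    have := parallelogram_law_with_norm ℂ x v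
    ring_nf
    ring_nf at this
    linarith
  have hbound : 4 * (r * ‖S x‖^2) ≤ c * (2 * (‖x‖^2 + ‖v‖^2)) := by
    calc 4 * (r * ‖S x‖^2) ≤ _ := hre
    _ ≤ c * ‖x+v‖^2 + c * ‖x-v‖^2 := add_le_add (hb _) (hb _)
    _ = c * (‖x+v‖^2 + ‖x-v‖^2) := by ring
    _ = c * (2 * (‖x‖^2 + ‖v‖^2)) := by rw [hpar]
  rw [hvn] at hbound
  have hxx : 4 * (‖x‖ * ‖S x‖) ≤ 4 * (c * ‖x‖^2) := by
    have : r * ‖S x‖^2 = ‖x‖ * ‖S x‖ := by rw [hr]; field_simp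
    nlinarith [hbound]
  nlinarith [hxx, hxn]

lemma le_nradius {n : ℕ} (M : Matrix (Fin n) (Fin n) ℂ) {x : EuclideanSpace ℂ (Fin n)}
    (hx : ‖x‖ = 1) :
    ‖(inner ℂ x (Matrix.toEuclideanCLM (𝕜 := ℂ) M x) : ℂ)‖ ≤ nradius M := by
  apply le_csSup
  · refine ⟨‖(Matrix.toEuclideanCLM (𝕜 := ℂ) M :
        EuclideanSpace ℂ (Fin n) →L[ℂ] EuclideanSpace ℂ (Fin n))‖, ?_⟩
    rintro r ⟨y, hy, rfl⟩
    calc ‖(inner ℂ y (Matrix.toEuclideanCLM (𝕜 := ℂ) M y) : ℂ)‖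
        ≤ ‖y‖ * ‖Matrix.toEuclideanCLM (𝕜 := ℂ) M y‖ := norm_inner_le_norm _ _
      _ ≤ ‖y‖ * (‖(Matrix.toEuclideanCLM (𝕜 := ℂ) M :
            EuclideanSpace ℂ (Fin n) →L[ℂ] EuclideanSpace ℂ (Fin n))‖ * ‖y‖) := by
          gcongr
          exact ContinuousLinearMap.le_opNorm _ _
      _ = _ := by rw [hy]; ring
  · exact ⟨x, hx, rfl⟩

lemma inner_TT_smul {n : ℕ} (M : Matrix (Fin n) (Fin n) ℂ) (z : EuclideanSpace ℂ (Fin n))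
    (c : ℝ) :
    (inner ℂ ((c:ℂ) • z) (Matrix.toEuclideanCLM (𝕜 := ℂ) M ((c:ℂ) • z)) : ℂ)
      = ((c^2 : ℝ) : ℂ) * inner ℂ z (Matrix.toEuclideanCLM (𝕜 := ℂ) M z) := by
  rw [_root_.map_smul, inner_smul_left, inner_smul_right]
  simp only [Complex.conj_ofReal]
  push_cast
  ring

lemma nradius_quad {n : ℕ} (M : Matrix (Fin n) (Fin n) ℂ) (z : EuclideanSpace ℂ (Fin n)) :
    ‖(inner ℂ z (Matrix.toEuclideanCLM (𝕜 := ℂ) M z) : ℂ)‖ ≤ nradius M * ‖z‖^2 := by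
  rcases eq_or_ne z 0 with rfl | hz
  · simp
  have hzn : (0:ℝ) < ‖z‖ := norm_pos_iff.mpr hz
  have hx : ‖((‖z‖⁻¹ : ℝ) : ℂ) • z‖ = 1 := by
    rw [norm_smul, Complex.norm_real, Real.norm_eq_abs, abs_of_pos (by positivity)]
    field_simp
  have h1 := le_nradius M hx
  rw [inner_TT_smul] at h1
  rw [norm_mul, Complex.norm_real, Real.norm_eq_abs, abs_of_pos (by positivity)] at h1
  have h2 : (‖z‖⁻¹)^2 * ‖(inner ℂ z (Matrix.toEuclideanCLM (𝕜 := ℂ) M z) : ℂ)‖ ≤ nradius M := h1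
  calc ‖(inner ℂ z (Matrix.toEuclideanCLM (𝕜 := ℂ) M z) : ℂ)‖
      = ((‖z‖⁻¹)^2 * ‖(inner ℂ z (Matrix.toEuclideanCLM (𝕜 := ℂ) M z) : ℂ)‖) * ‖z‖^2 := by
        field_simp
    _ ≤ nradius M * ‖z‖^2 := by gcongr
    
lemma TT_inner_symm {n : ℕ} {M : Matrix (Fin n) (Fin n) ℂ} (hM : Mᴴ = M)
    (x y : EuclideanSpace ℂ (Fin n)) :
    (inner ℂ (Matrix.toEuclideanCLM (𝕜 := ℂ) M x) y : ℂ)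
      = inner ℂ x (Matrix.toEuclideanCLM (𝕜 := ℂ) M y) := by
  have hstar : ContinuousLinearMap.adjoint (Matrix.toEuclideanCLM (𝕜 := ℂ) M)
      = Matrix.toEuclideanCLM (𝕜 := ℂ) M := by
    rw [← ContinuousLinearMap.star_eq_adjoint, ← map_star]
    rw [Matrix.star_eq_conjTranspose, hM]
  conv_lhs => rw [← hstar]
  exact ContinuousLinearMap.adjoint_inner_left _ _ _

set_option maxHeartbeats 1600000 in
theorem stmt4 {n : ℕ} (hn : 1 ≤ n) {α : ℝ} (hα0 : 0 ≤ α) (hα : α < Real.pi / 2)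
    {A : Matrix (Fin n) (Fin n) ℂ} (hA : InSector α A) :
    Real.cos α ^ 3 * (nradius A)⁻¹ ≤ nradius A⁻¹ := by
  classical
  have hcos : 0 < Real.cos α :=
    Real.cos_pos_of_mem_Ioo ⟨by linarith [Real.pi_pos], hα⟩
  have hcos1 : Real.cos α ≤ 1 := Real.cos_le_one α
  have htan : 0 ≤ Real.tan α := by
    rw [Real.tan_eq_sin_div_cos]
    have : 0 ≤ Real.sin α := Real.sin_nonneg_of_nonneg_of_le_pi hα0 (by linarith [Real.pi_pos])
    positivity
  have hsec : 1 + Real.tan α ^ 2 = 1 / Real.cos α ^ 2 := by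
    rw [Real.tan_eq_sin_div_cos]
    field_simp
    try nlinarith [Real.sin_sq_add_cos_sq α]
  have hH : (matRe A).PosDef := hA.1
  -- real part of quadratic form
  have hRe : ∀ z : EuclideanSpace ℂ (Fin n),
      (inner ℂ z (Matrix.toEuclideanCLM (𝕜 := ℂ) (matRe A) z) : ℂ)
        = (((inner ℂ z (Matrix.toEuclideanCLM (𝕜 := ℂ) A z) : ℂ).re : ℝ) : ℂ) := by
    intro z
    have hmap : Matrix.toEuclideanCLM (𝕜 := ℂ) (matRe A)
        = (1/2 : ℂ) • (Matrix.toEuclideanCLM (𝕜 := ℂ) A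
            + star (Matrix.toEuclideanCLM (𝕜 := ℂ) A)) := by
      simp only [matRe]
      rw [_root_.map_smul, map_add, ← map_star, Matrix.star_eq_conjTranspose]
    rw [hmap]
    simp only [ContinuousLinearMap.smul_apply, ContinuousLinearMap.add_apply,
      inner_smul_right, inner_add_right]
    rw [ContinuousLinearMap.star_eq_adjoint, ContinuousLinearMap.adjoint_inner_right]
    set w := (inner ℂ z (Matrix.toEuclideanCLM (𝕜 := ℂ) A z) : ℂ) with hwdef
    have h2 : (inner ℂ (Matrix.toEuclideanCLM (𝕜 := ℂ) A z) z : ℂ) = (starRingEnd ℂ) w := by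
      rw [hwdef, inner_conj_symm]
    rw [h2]
    apply Complex.ext <;>
      simp [Complex.mul_re, Complex.mul_im, Complex.add_re, Complex.add_im] <;> try ring
  -- positivity of real part
  have hpos : ∀ z : EuclideanSpace ℂ (Fin n), z ≠ 0 →
      0 < (inner ℂ z (Matrix.toEuclideanCLM (𝕜 := ℂ) A z) : ℂ).re := by
    intro z hz
    have hzf : (WithLp.equiv 2 (Fin n → ℂ)) z ≠ 0 := by
      intro h
      apply hz
      have := congrArg (WithLp.equiv 2 (Fin n → ℂ)).symm h
      simpa using this
    have h1 := hH.re_dotProduct_pos hzf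
    have h2 : (inner ℂ z (Matrix.toEuclideanCLM (𝕜 := ℂ) (matRe A) z) : ℂ)
        = star ((WithLp.equiv 2 (Fin n → ℂ)) z) ⬝ᵥ (matRe A) *ᵥ ((WithLp.equiv 2 (Fin n → ℂ)) z) := by
      rw [EuclideanSpace.inner_eq_star_dotProduct, dotProduct_comm]
      congr 1
    rw [hRe z] at h2
    have : ((inner ℂ z (Matrix.toEuclideanCLM (𝕜 := ℂ) A z) : ℂ).re : ℂ).re
        = RCLike.re (star ((WithLp.equiv 2 (Fin n → ℂ)) z) ⬝ᵥ (matRe A) *ᵥ ((WithLp.equiv 2 (Fin n → ℂ)) z)) := by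
      rw [← h2]; rfl
    rw [Complex.ofReal_re] at this
    rw [this]
    exact h1
  -- sector bound for all vectors
  have hsector : ∀ z : EuclideanSpace ℂ (Fin n),
      |(inner ℂ z (Matrix.toEuclideanCLM (𝕜 := ℂ) A z) : ℂ).im|
        ≤ Real.tan α * (inner ℂ z (Matrix.toEuclideanCLM (𝕜 := ℂ) A z) : ℂ).re := by
    intro z
    rcases eq_or_ne z 0 with rfl | hz
    · simp
    have hzn : (0:ℝ) < ‖z‖ := norm_pos_iff.mpr hz
    have hx : ‖((‖z‖⁻¹ : ℝ) : ℂ) • z‖ = 1 := by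
      rw [norm_smul, Complex.norm_real, Real.norm_eq_abs, abs_of_pos (by positivity)]
      field_simp
    have h1 := hA.2 _ hx
    rw [inner_TT_smul] at h1
    set w := (inner ℂ z (Matrix.toEuclideanCLM (𝕜 := ℂ) A z) : ℂ) with hw
    rw [Complex.im_ofReal_mul, Complex.re_ofReal_mul] at h1
    rw [abs_mul, abs_of_pos (by positivity : (0:ℝ) < (‖z‖⁻¹)^2)] at h1
    have hc2 : (0:ℝ) < (‖z‖⁻¹)^2 := by positivity
    nlinarith [h1]
  -- the matrix K with A = matRe A + I • K
  set K : Matrix (Fin n) (Fin n) ℂ := (-Complex.I) • (A - matRe A) with hKdef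
  have hK : matRe A + Complex.I • K = A := by
    rw [hKdef, smul_smul]
    simp [Complex.I_mul_I]
  have hKherm : Kᴴ = K := by
    have hH1 : (matRe A)ᴴ = matRe A := hH.1
    have hKeq : K = (-(Complex.I)/2) • A + (Complex.I/2) • Aᴴ := by
      rw [hKdef]
      simp only [matRe]
      module
    rw [hKeq]
    rw [conjTranspose_add, conjTranspose_smul, conjTranspose_smul, conjTranspose_conjTranspose]
    rw [show star (-(Complex.I)/2) = Complex.I/2 by simp [Complex.star_def, Complex.ext_iff],
      show star ((Complex.I)/2) = -Complex.I/2 by simp [Complex.star_def, Complex.ext_iff]]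
    module
  -- quadratic form of K is the imaginary part
  have hKquad : ∀ z : EuclideanSpace ℂ (Fin n),
      (inner ℂ z (Matrix.toEuclideanCLM (𝕜 := ℂ) K z) : ℂ)
        = (((inner ℂ z (Matrix.toEuclideanCLM (𝕜 := ℂ) A z) : ℂ).im : ℝ) : ℂ) := by
    intro z
    have hmap : Matrix.toEuclideanCLM (𝕜 := ℂ) K
        = (-Complex.I) • (Matrix.toEuclideanCLM (𝕜 := ℂ) A
            - Matrix.toEuclideanCLM (𝕜 := ℂ) (matRe A)) := by
      rw [hKdef, _root_.map_smul, map_sub]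
    rw [hmap]
    simp only [ContinuousLinearMap.smul_apply, ContinuousLinearMap.sub_apply,
      inner_smul_right, inner_sub_right]
    rw [hRe z]
    set w := (inner ℂ z (Matrix.toEuclideanCLM (𝕜 := ℂ) A z) : ℂ)
    apply Complex.ext <;> simp [Complex.mul_re, Complex.mul_im]
  -- square root of the real part
  obtain ⟨R, hRps, hRR⟩ : ∃ R : Matrix (Fin n) (Fin n) ℂ, R.PosSemidef ∧ R * R = matRe A :=
    by open scoped MatrixOrder in
    exact ⟨CFC.sqrt (matRe A), (CFC.sqrt_nonneg _).posSemidef, CFC.sqrt_mul_sqrt_self _ hH.posSemidef.nonneg⟩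
  have hRherm : Rᴴ = R := hRps.1
  have hHdet : (matRe A).det ≠ 0 := ne_of_gt (Matrix.PosDef.det_pos hH)
  have hRdet : IsUnit R.det := by
    rw [isUnit_iff_ne_zero]
    intro h
    apply hHdet
    rw [← hRR, Matrix.det_mul, h, mul_zero]
  have hRRi : R * R⁻¹ = 1 := Matrix.mul_nonsing_inv R hRdet
  have hRiR : R⁻¹ * R = 1 := Matrix.nonsing_inv_mul R hRdet
  have hRiherm : (R⁻¹)ᴴ = R⁻¹ := by
    rw [Matrix.conjTranspose_nonsing_inv, hRherm]
  set S : Matrix (Fin n) (Fin n) ℂ := R⁻¹ * K * R⁻¹ with hSdef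
  have hSherm : Sᴴ = S := by
    rw [hSdef, conjTranspose_mul, conjTranspose_mul, hRiherm, hKherm]
    rw [mul_assoc]
  -- applying products of matrices
  have happ : ∀ (M N : Matrix (Fin n) (Fin n) ℂ) (x : EuclideanSpace ℂ (Fin n)),
      Matrix.toEuclideanCLM (𝕜 := ℂ) (M * N) x
        = Matrix.toEuclideanCLM (𝕜 := ℂ) M (Matrix.toEuclideanCLM (𝕜 := ℂ) N x) := by
    intro M N x
    rw [_root_.map_mul]
    rfl
  have hone : ∀ x : EuclideanSpace ℂ (Fin n), Matrix.toEuclideanCLM (𝕜 := ℂ) (1 : Matrix (Fin n) (Fin n) ℂ) x = x := by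
    intro x
    rw [_root_.map_one]
    rfl
  have hTRRi : ∀ u : EuclideanSpace ℂ (Fin n),
      Matrix.toEuclideanCLM (𝕜 := ℂ) R (Matrix.toEuclideanCLM (𝕜 := ℂ) R⁻¹ u) = u := by
    intro u
    rw [← happ, hRRi, hone]
  -- norm of R v squared
  have hnormTR : ∀ v : EuclideanSpace ℂ (Fin n),
      (‖Matrix.toEuclideanCLM (𝕜 := ℂ) R v‖:ℝ)^2
        = (inner ℂ v (Matrix.toEuclideanCLM (𝕜 := ℂ) A v) : ℂ).re := by
    intro v
    have h1 : (inner ℂ (Matrix.toEuclideanCLM (𝕜 := ℂ) R v) (Matrix.toEuclideanCLM (𝕜 := ℂ) R v) : ℂ)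
        = inner ℂ v (Matrix.toEuclideanCLM (𝕜 := ℂ) (matRe A) v) := by
      rw [TT_inner_symm hRherm, ← happ, hRR]
    rw [inner_self_eq_norm_sq_to_K, hRe v] at h1
    rw [rclike_ofReal_complex, ← Complex.ofReal_pow] at h1
    exact_mod_cast h1
  have hw0 : (0:ℝ) ≤ nradius A := by
    have hx0 : ‖(EuclideanSpace.single (⟨0, hn⟩ : Fin n) (1:ℂ) : EuclideanSpace ℂ (Fin n))‖ = 1 := by
      rw [EuclideanSpace.norm_single, norm_one]
    exact le_trans (norm_nonneg _) (le_nradius A hx0)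
  -- bound on quadratic form of S
  have hSquad : ∀ u : EuclideanSpace ℂ (Fin n),
      ‖(inner ℂ u (Matrix.toEuclideanCLM (𝕜 := ℂ) S u) : ℂ)‖ ≤ Real.tan α * ‖u‖^2 := by
    intro u
    set z := Matrix.toEuclideanCLM (𝕜 := ℂ) R⁻¹ u with hz
    have h1 : Matrix.toEuclideanCLM (𝕜 := ℂ) S u
        = Matrix.toEuclideanCLM (𝕜 := ℂ) R⁻¹ (Matrix.toEuclideanCLM (𝕜 := ℂ) K z) := by
      rw [hSdef, happ, happ]
    have h2 : (inner ℂ u (Matrix.toEuclideanCLM (𝕜 := ℂ) S u) : ℂ)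
        = inner ℂ z (Matrix.toEuclideanCLM (𝕜 := ℂ) K z) := by
      rw [h1, ← TT_inner_symm hRiherm]
    rw [h2, hKquad z]
    have h3 := hsector z
    have h4 : (inner ℂ z (Matrix.toEuclideanCLM (𝕜 := ℂ) A z) : ℂ).re
        = ‖Matrix.toEuclideanCLM (𝕜 := ℂ) R z‖^2 := (hnormTR z).symm
    rw [h4, hz, hTRRi u] at h3
    rw [Complex.norm_real, Real.norm_eq_abs]
    exact h3
  have hSnorm : ∀ u : EuclideanSpace ℂ (Fin n),
      ‖Matrix.toEuclideanCLM (𝕜 := ℂ) S u‖ ≤ Real.tan α * ‖u‖ :=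
    selfadj_quad_norm_bound _ (TT_inner_symm hSherm) htan hSquad
  -- the key inequality
  have hkey : ∀ z : EuclideanSpace ℂ (Fin n),
      ‖Matrix.toEuclideanCLM (𝕜 := ℂ) A z‖^2
        ≤ (1 + Real.tan α^2) * (nradius A * (inner ℂ z (Matrix.toEuclideanCLM (𝕜 := ℂ) A z) : ℂ).re) := by
    intro z
    set u := Matrix.toEuclideanCLM (𝕜 := ℂ) R z with hu
    have hKRSR : R * (S * R) = K := by
      rw [hSdef]
      simp only [Matrix.mul_assoc]
      rw [hRiR, Matrix.mul_one, ← Matrix.mul_assoc, hRRi, Matrix.one_mul]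
    have hAz : Matrix.toEuclideanCLM (𝕜 := ℂ) A z
        = Matrix.toEuclideanCLM (𝕜 := ℂ) R
            (u + Complex.I • Matrix.toEuclideanCLM (𝕜 := ℂ) S u) := by
      conv_lhs => rw [← hK]
      rw [map_add, ContinuousLinearMap.add_apply, _root_.map_smul, ContinuousLinearMap.smul_apply]
      rw [← hRR, happ, ← hKRSR, happ, happ, ← hu]
      rw [map_add, _root_.map_smul]
    have hureal : (inner ℂ u (Matrix.toEuclideanCLM (𝕜 := ℂ) S u) : ℂ).im = 0 := by
      have h1 : (starRingEnd ℂ) (inner ℂ u (Matrix.toEuclideanCLM (𝕜 := ℂ) S u) : ℂ)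
          = inner ℂ u (Matrix.toEuclideanCLM (𝕜 := ℂ) S u) := by
        rw [inner_conj_symm, TT_inner_symm hSherm]
      rw [Complex.conj_eq_iff_im] at h1
      exact h1
    have hvnorm : ‖u + Complex.I • Matrix.toEuclideanCLM (𝕜 := ℂ) S u‖^2
        = ‖u‖^2 + ‖Matrix.toEuclideanCLM (𝕜 := ℂ) S u‖^2 := by
      rw [norm_add_sq (𝕜 := ℂ)]
      rw [inner_smul_right]
      rw [norm_smul, Complex.norm_I, one_mul]
      have : RCLike.re (Complex.I * (inner ℂ u (Matrix.toEuclideanCLM (𝕜 := ℂ) S u) : ℂ)) = 0 := by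
        have : (Complex.I * (inner ℂ u (Matrix.toEuclideanCLM (𝕜 := ℂ) S u) : ℂ)).re = 0 := by
          rw [Complex.mul_re, hureal]
          simp
        simpa using this
      rw [this]
      ring
    have hRv := hnormTR (u + Complex.I • Matrix.toEuclideanCLM (𝕜 := ℂ) S u)
    have hRvle : (‖Matrix.toEuclideanCLM (𝕜 := ℂ) R
        (u + Complex.I • Matrix.toEuclideanCLM (𝕜 := ℂ) S u)‖:ℝ)^2
        ≤ nradius A * ‖u + Complex.I • Matrix.toEuclideanCLM (𝕜 := ℂ) S u‖^2 := by
      rw [hRv]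
      calc (inner ℂ _ (Matrix.toEuclideanCLM (𝕜 := ℂ) A _) : ℂ).re
          ≤ ‖(inner ℂ (u + Complex.I • Matrix.toEuclideanCLM (𝕜 := ℂ) S u)
              (Matrix.toEuclideanCLM (𝕜 := ℂ) A (u + Complex.I • Matrix.toEuclideanCLM (𝕜 := ℂ) S u)) : ℂ)‖ := by
            exact (le_abs_self _).trans (Complex.abs_re_le_norm _)
        _ ≤ nradius A * ‖u + Complex.I • Matrix.toEuclideanCLM (𝕜 := ℂ) S u‖^2 := nradius_quad A _
    have hSu2 : ‖Matrix.toEuclideanCLM (𝕜 := ℂ) S u‖^2 ≤ Real.tan α^2 * ‖u‖^2 := by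
      have := hSnorm u
      nlinarith [norm_nonneg (Matrix.toEuclideanCLM (𝕜 := ℂ) S u), norm_nonneg u, htan]
    have hu2 : ‖u‖^2 = (inner ℂ z (Matrix.toEuclideanCLM (𝕜 := ℂ) A z) : ℂ).re := hnormTR z
    calc ‖Matrix.toEuclideanCLM (𝕜 := ℂ) A z‖^2
        = (‖Matrix.toEuclideanCLM (𝕜 := ℂ) R
            (u + Complex.I • Matrix.toEuclideanCLM (𝕜 := ℂ) S u)‖:ℝ)^2 := by rw [hAz]
      _ ≤ nradius A * ‖u + Complex.I • Matrix.toEuclideanCLM (𝕜 := ℂ) S u‖^2 := hRvle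
      _ = nradius A * (‖u‖^2 + ‖Matrix.toEuclideanCLM (𝕜 := ℂ) S u‖^2) := by rw [hvnorm]
      _ ≤ nradius A * (‖u‖^2 + Real.tan α^2 * ‖u‖^2) := by
          apply mul_le_mul_of_nonneg_left _ hw0
          linarith [hSu2]
      _ = (1 + Real.tan α^2) * (nradius A * ‖u‖^2) := by ring
      _ = (1 + Real.tan α^2) * (nradius A * (inner ℂ z (Matrix.toEuclideanCLM (𝕜 := ℂ) A z) : ℂ).re) := by
          rw [hu2]
  -- invertibility of A
  have hAdet : IsUnit A.det := by
    rw [isUnit_iff_ne_zero]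
    intro h
    obtain ⟨v, hv, hAv⟩ := Matrix.exists_mulVec_eq_zero_iff.mpr h
    set z : EuclideanSpace ℂ (Fin n) := (WithLp.equiv 2 (Fin n → ℂ)).symm v with hzdef
    have hz : z ≠ 0 := by
      intro h0
      apply hv
      have := congrArg (WithLp.equiv 2 (Fin n → ℂ)) h0
      simpa [hzdef] using this
    have hTAz : Matrix.toEuclideanCLM (𝕜 := ℂ) A z = 0 := by
      rw [hzdef, WithLp.equiv_symm_apply, Matrix.toEuclideanCLM_toLp]
      rw [hAv]
      simp
    have := hpos z hz
    rw [hTAz] at this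
    simp at this
  have hAinv : A⁻¹ * A = 1 := Matrix.nonsing_inv_mul A hAdet
  -- choose a unit vector
  set x₀ : EuclideanSpace ℂ (Fin n) := EuclideanSpace.single ⟨0, hn⟩ (1:ℂ) with hx₀def
  have hx₀ : ‖x₀‖ = 1 := by rw [hx₀def, EuclideanSpace.norm_single, norm_one]
  have hx₀ne : x₀ ≠ 0 := by
    intro h
    rw [h, norm_zero] at hx₀
    norm_num at hx₀
  set w₀ : ℂ := inner ℂ x₀ (Matrix.toEuclideanCLM (𝕜 := ℂ) A x₀) with hw₀def
  have hw₀pos : 0 < w₀.re := hpos x₀ hx₀ne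
  set z : EuclideanSpace ℂ (Fin n) := Matrix.toEuclideanCLM (𝕜 := ℂ) A x₀ with hzdef
  have hzne : z ≠ 0 := by
    intro h
    have h0 : w₀ = 0 := by rw [hw₀def, h, inner_zero_right]
    rw [h0] at hw₀pos
    simp at hw₀pos
  have hzn : (0:ℝ) < ‖z‖ := norm_pos_iff.mpr hzne
  -- A⁻¹ applied to z
  have hAiz : Matrix.toEuclideanCLM (𝕜 := ℂ) A⁻¹ z = x₀ := by
    rw [hzdef, ← happ, hAinv, hone]
  -- the unit vector y
  have hy : ‖((‖z‖⁻¹ : ℝ) : ℂ) • z‖ = 1 := by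
    rw [norm_smul, Complex.norm_real, Real.norm_eq_abs, abs_of_pos (by positivity)]
    field_simp
  have hinnery : (inner ℂ (((‖z‖⁻¹ : ℝ) : ℂ) • z)
      (Matrix.toEuclideanCLM (𝕜 := ℂ) A⁻¹ (((‖z‖⁻¹ : ℝ) : ℂ) • z)) : ℂ)
      = (((‖z‖⁻¹)^2 : ℝ) : ℂ) * (starRingEnd ℂ) w₀ := by
    rw [inner_TT_smul]
    congr 1
    rw [hAiz, hw₀def]
    rw [← inner_conj_symm]
  have hle : (‖z‖⁻¹)^2 * ‖w₀‖ ≤ nradius A⁻¹ := by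
    have h1 := le_nradius A⁻¹ hy
    rw [hinnery, norm_mul, Complex.norm_real, Real.norm_eq_abs,
      abs_of_pos (by positivity : (0:ℝ) < (‖z‖⁻¹)^2), RCLike.norm_conj] at h1
    exact h1
  -- numeric conclusion
  have hwA : 0 < nradius A := by
    have := le_nradius A hx₀
    have h2 : w₀.re ≤ ‖w₀‖ := by
      exact (le_abs_self _).trans (Complex.abs_re_le_norm _)
    rw [← hw₀def] at this
    linarith
  have hk := hkey x₀
  rw [← hzdef, ← hw₀def] at hk
  have hre_le : w₀.re ≤ ‖w₀‖ := by
    exact (le_abs_self _).trans (Complex.abs_re_le_norm _)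
  -- ‖z‖^2 * cos^2 ≤ nradius A * w₀.re
  have h2 : ‖z‖^2 * Real.cos α^2 ≤ nradius A * w₀.re := by
    have hc2 : (0:ℝ) < Real.cos α^2 := by positivity
    have : ‖z‖^2 ≤ (1 / Real.cos α^2) * (nradius A * w₀.re) := by
      rw [← hsec]; exact hk
    calc ‖z‖^2 * Real.cos α^2 ≤ ((1 / Real.cos α^2) * (nradius A * w₀.re)) * Real.cos α^2 := by
          gcongr
      _ = nradius A * w₀.re := by field_simp
  have hfinal : Real.cos α^2 * (nradius A)⁻¹ ≤ (‖z‖⁻¹)^2 * w₀.re := by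
    have h3 : Real.cos α^2 / nradius A ≤ w₀.re / ‖z‖^2 := by
      rw [div_le_div_iff₀ hwA (by positivity)]
      nlinarith [h2]
    calc Real.cos α^2 * (nradius A)⁻¹ = Real.cos α^2 / nradius A := by rw [div_eq_mul_inv]
      _ ≤ w₀.re / ‖z‖^2 := h3
      _ = (‖z‖⁻¹)^2 * w₀.re := by rw [inv_pow, div_eq_mul_inv, mul_comm]
  calc Real.cos α ^ 3 * (nradius A)⁻¹ ≤ Real.cos α^2 * (nradius A)⁻¹ := by
        apply mul_le_mul_of_nonneg_right _ (inv_nonneg.mpr hwA.le)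
        exact pow_le_pow_of_le_one hcos.le hcos1 (by norm_num)
    _ ≤ (‖z‖⁻¹)^2 * w₀.re := hfinal
    _ ≤ (‖z‖⁻¹)^2 * ‖w₀‖ := mul_le_mul_of_nonneg_left hre_le (by positivity)
    _ ≤ nradius A⁻¹ := hle
end

section
/- Let n ≥ 1, 0 ≤ α < π/2, let A, B ∈ Mₙ(ℂ) satisfy A, B ∈ S_α, and let ν be a probability measure on [0,1]. Then the matrix A σ B := ∫₀¹ ((1−s)A⁻¹ + sB⁻¹)⁻¹ dν(s) belongs to S_α. -/
open Matrix MeasureTheory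
open scoped ComplexOrder

attribute [local instance] Matrix.normedAddCommGroup Matrix.normedSpace

/-- The operator mean `A σ B = ∫₀¹ ((1-s)A⁻¹ + sB⁻¹)⁻¹ dν(s)` associated with a
probability measure `ν` on `[0,1]`. -/
noncomputable def matMean {n : ℕ} (ν : Measure ℝ) (A B : Matrix (Fin n) (Fin n) ℂ) :
    Matrix (Fin n) (Fin n) ℂ :=
  ∫ s in Set.Icc (0 : ℝ) 1, ((1 - s) • A⁻¹ + s • B⁻¹)⁻¹ ∂ν

noncomputable def qf {n : ℕ} (A : Matrix (Fin n) (Fin n) ℂ) (v : Fin n → ℂ) : ℂ :=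
  dotProduct (star v) (A *ᵥ v)

lemma qf_bridge {n : ℕ} (A : Matrix (Fin n) (Fin n) ℂ) (x : EuclideanSpace ℂ (Fin n)) :
    (inner ℂ x (Matrix.toEuclideanCLM (𝕜 := ℂ) A x) : ℂ) = qf A (WithLp.equiv 2 _ x) := by
  rw [EuclideanSpace.inner_eq_star_dotProduct, Matrix.ofLp_toEuclideanCLM, dotProduct_comm]
  rfl

lemma qf_conj {n : ℕ} (A : Matrix (Fin n) (Fin n) ℂ) (v : Fin n → ℂ) :
    qf Aᴴ v = starRingEnd ℂ (qf A v) := by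
  simp only [qf, Matrix.mulVec_conjTranspose]
  rw [show (starRingEnd ℂ) (star v ⬝ᵥ A *ᵥ v) = star (star v ⬝ᵥ A *ᵥ v) from rfl,
    Matrix.star_dotProduct_star, Matrix.dotProduct_mulVec]

lemma qf_add {n : ℕ} (A B : Matrix (Fin n) (Fin n) ℂ) (v : Fin n → ℂ) :
    qf (A + B) v = qf A v + qf B v := by
  simp [qf, Matrix.add_mulVec]

lemma qf_smul {n : ℕ} (c : ℂ) (A : Matrix (Fin n) (Fin n) ℂ) (v : Fin n → ℂ) :
    qf (c • A) v = c * qf A v := by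
  simp [qf, Matrix.smul_mulVec]

lemma qf_matRe {n : ℕ} (A : Matrix (Fin n) (Fin n) ℂ) (v : Fin n → ℂ) :
    qf (matRe A) v = ((qf A v).re : ℂ) := by
  rw [matRe, qf_smul, qf_add, qf_conj, Complex.add_conj]
  push_cast
  ring

/-- Quadratic-form version of the sector condition. -/
def Sec {n : ℕ} (α : ℝ) (A : Matrix (Fin n) (Fin n) ℂ) : Prop :=
  ∀ v : Fin n → ℂ, v ≠ 0 → 0 < (qf A v).re ∧ |(qf A v).im| ≤ Real.tan α * (qf A v).re

lemma matRe_posDef_iff {n : ℕ} (A : Matrix (Fin n) (Fin n) ℂ) :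
    (matRe A).PosDef ↔ ∀ v : Fin n → ℂ, v ≠ 0 → 0 < (qf A v).re := by
  constructor
  · intro h v hv
    have := h.dotProduct_mulVec_pos hv
    rw [show star v ⬝ᵥ matRe A *ᵥ v = qf (matRe A) v from rfl, qf_matRe] at this
    exact_mod_cast this
  · intro h
    rw [Matrix.posDef_iff_dotProduct_mulVec]
    refine ⟨?_, fun v hv => ?_⟩
    · unfold matRe Matrix.IsHermitian
      rw [Matrix.conjTranspose_smul, Matrix.conjTranspose_add, Matrix.conjTranspose_conjTranspose]
      norm_num [add_comm]
    · rw [show star v ⬝ᵥ matRe A *ᵥ v = qf (matRe A) v from rfl, qf_matRe]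
      exact_mod_cast h v hv

lemma Sec.det_ne {n : ℕ} {α : ℝ} {A : Matrix (Fin n) (Fin n) ℂ} (h : Sec α A) :
    A.det ≠ 0 := by
  intro h0
  obtain ⟨v, hv, hAv⟩ := (Matrix.exists_mulVec_eq_zero_iff).mpr h0
  have := (h v hv).1
  rw [qf, hAv, dotProduct_zero] at this
  simp at this

lemma Sec.inv {n : ℕ} {α : ℝ} {A : Matrix (Fin n) (Fin n) ℂ} (h : Sec α A) :
    Sec α A⁻¹ := by
  intro v hv
  set w := A⁻¹ *ᵥ v with hw
  have hAw : A *ᵥ w = v := by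
    rw [hw, Matrix.mulVec_mulVec, Matrix.mul_nonsing_inv _ (isUnit_iff_ne_zero.mpr h.det_ne),
      Matrix.one_mulVec]
  have hwne : w ≠ 0 := by
    intro h0; apply hv; rw [← hAw, h0, Matrix.mulVec_zero]
  have key : qf A⁻¹ v = starRingEnd ℂ (qf A w) := by
    rw [qf, ← hw]
    nth_rewrite 1 [← hAw]
    rw [Matrix.star_dotProduct]
    rfl
  obtain ⟨h1, h2⟩ := h w hwne
  rw [key]
  simp only [Complex.conj_re, Complex.conj_im, abs_neg]
  exact ⟨h1, h2⟩

lemma Sec.comb {n : ℕ} {α : ℝ} {A B : Matrix (Fin n) (Fin n) ℂ} (hA : Sec α A) (hB : Sec α B)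
    {s : ℝ} (hs0 : 0 ≤ s) (hs1 : s ≤ 1) : Sec α ((1 - s) • A + s • B) := by
  intro v hv
  have hre : ((1 - s) • A + s • B : Matrix (Fin n) (Fin n) ℂ) = ((1 - s : ℝ) : ℂ) • A + ((s : ℝ) : ℂ) • B := by
    ext i j; simp [Complex.real_smul]
  have hq : qf ((1 - s) • A + s • B) v = ((1 - s : ℝ) : ℂ) * qf A v + ((s : ℝ) : ℂ) * qf B v := by
    rw [hre]
    simp [qf, Matrix.add_mulVec, Matrix.smul_mulVec]
  obtain ⟨a1, a2⟩ := hA v hv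
  obtain ⟨b1, b2⟩ := hB v hv
  rw [hq]
  simp only [Complex.add_re, Complex.add_im, Complex.mul_re, Complex.mul_im,
    Complex.ofReal_re, Complex.ofReal_im]
  ring_nf
  constructor
  · rcases lt_or_eq_of_le hs1 with h | h
    · nlinarith [mul_nonneg hs0 b1.le, mul_pos (sub_pos.mpr h) a1]
    · nlinarith [b1]
  · have habs : |(1 - s) * (qf A v).im + s * (qf B v).im| ≤
        (1 - s) * |(qf A v).im| + s * |(qf B v).im| := by
      calc _ ≤ |(1 - s) * (qf A v).im| + |s * (qf B v).im| := abs_add_le _ _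
        _ = (1 - s) * |(qf A v).im| + s * |(qf B v).im| := by
            rw [abs_mul, abs_mul, abs_of_nonneg (by linarith), abs_of_nonneg hs0]
    have e1 : (1 - s) * |(qf A v).im| ≤ (1 - s) * (Real.tan α * (qf A v).re) :=
      mul_le_mul_of_nonneg_left a2 (by linarith)
    have e2 : s * |(qf B v).im| ≤ s * (Real.tan α * (qf B v).re) :=
      mul_le_mul_of_nonneg_left b2 hs0
    calc _ ≤ (1 - s) * |(qf A v).im| + s * |(qf B v).im| := by
          convert habs using 2 <;> ring
      _ ≤ Real.tan α * ((1-s) * (qf A v).re + s * (qf B v).re) := by nlinarith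
      _ = _ := by ring

lemma qf_vsmul {n : ℕ} (A : Matrix (Fin n) (Fin n) ℂ) (c : ℂ) (v : Fin n → ℂ) :
    qf A (c • v) = starRingEnd ℂ c * c * qf A v := by
  simp only [qf, Matrix.mulVec_smul, star_smul, smul_dotProduct, dotProduct_smul]
  simp [mul_assoc]
  ring

lemma inSector_iff_sec {n : ℕ} (α : ℝ) (A : Matrix (Fin n) (Fin n) ℂ) :
    InSector α A ↔ Sec α A := by
  constructor
  · rintro ⟨hpd, him⟩ v hv
    refine ⟨(matRe_posDef_iff A).mp hpd v hv, ?_⟩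
    set x0 : EuclideanSpace ℂ (Fin n) := (WithLp.equiv 2 _).symm v with hx0
    have hx0ne : x0 ≠ 0 := by
      intro h0; apply hv
      have : (WithLp.equiv 2 ((Fin n) → ℂ)) x0 = v := by simp [hx0]
      rw [h0] at this; simpa using this.symm
    set r : ℝ := ‖x0‖ with hr
    have hrpos : 0 < r := norm_pos_iff.mpr hx0ne
    set u : EuclideanSpace ℂ (Fin n) := ((r⁻¹ : ℝ) : ℂ) • x0 with hu
    have hun : ‖u‖ = 1 := by
      rw [hu, norm_smul, Complex.norm_real, Real.norm_eq_abs, abs_of_pos (inv_pos.mpr hrpos)]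
      exact inv_mul_cancel₀ hrpos.ne'
    have hqu : (inner ℂ u (Matrix.toEuclideanCLM (𝕜 := ℂ) A u) : ℂ)
        = ((r⁻¹ ^ 2 : ℝ) : ℂ) * qf A v := by
      rw [qf_bridge, hu]
      have : (WithLp.equiv 2 ((Fin n) → ℂ)) (((r⁻¹ : ℝ) : ℂ) • x0)
          = ((r⁻¹ : ℝ) : ℂ) • v := by simp [hx0]
      rw [this, qf_vsmul, Complex.conj_ofReal]
      push_cast
      ring
    have h2 := him u hun
    rw [hqu] at h2
    have t : ℝ := r⁻¹ ^ 2
    have htpos : 0 < r⁻¹ ^ 2 := by positivity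
    simp only [Complex.mul_im, Complex.mul_re, Complex.ofReal_re, Complex.ofReal_im] at h2
    ring_nf at h2
    -- h2 should now say |r⁻¹^2 * im| ≤ tan α * (r⁻¹^2 * re) up to assoc
    rw [abs_mul, abs_of_pos htpos] at h2
    nlinarith [abs_nonneg (qf A v).im, htpos]
  · intro h
    refine ⟨(matRe_posDef_iff A).mpr fun v hv => (h v hv).1, fun x hx => ?_⟩
    have hv : (WithLp.equiv 2 ((Fin n) → ℂ)) x ≠ 0 := by
      intro h0
      have hx0 : x = 0 := (WithLp.equiv 2 _).injective (by simpa using h0)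
      rw [hx0] at hx; simp at hx
    rw [qf_bridge]
    exact (h _ hv).2

theorem sec_matMean {n : ℕ} {α : ℝ} {A B : Matrix (Fin n) (Fin n) ℂ}
    (hA' : Sec α A) (hB' : Sec α B)
    (ν : Measure ℝ) [IsProbabilityMeasure ν] (hν : ν (Set.Icc (0 : ℝ) 1)ᶜ = 0) :
    Sec α (matMean ν A B) := by
  set T : ℝ → Matrix (Fin n) (Fin n) ℂ := fun s => (1 - s) • A⁻¹ + s • B⁻¹ with hTdef
  have hTreal : ∀ s : ℝ, T s = ((1 - s : ℝ) : ℂ) • A⁻¹ + ((s : ℝ) : ℂ) • B⁻¹ := by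
    intro s; ext i j; simp [hTdef, Complex.real_smul]
  have hTs : ∀ s ∈ Set.Icc (0:ℝ) 1, Sec α (T s) := fun s hs =>
    hA'.inv.comb hB'.inv hs.1 hs.2
  have hT : ∀ s ∈ Set.Icc (0:ℝ) 1, Sec α (T s)⁻¹ := fun s hs => (hTs s hs).inv
  have hTc : Continuous T := by
    apply Continuous.add
    · exact (continuous_const.sub continuous_id).smul continuous_const
    · exact continuous_id.smul continuous_const
  have hdet : ∀ s ∈ Set.Icc (0:ℝ) 1, (T s).det ≠ 0 := fun s hs => (hTs s hs).det_ne
  have hc : ContinuousOn (fun s => (T s)⁻¹) (Set.Icc (0:ℝ) 1) := by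
    simp only [Matrix.inv_def, Ring.inverse_eq_inv']
    exact (hTc.matrix_det.continuousOn.inv₀ hdet).smul hTc.matrix_adjugate.continuousOn
  letI : ContinuousENorm (Matrix (Fin n) (Fin n) ℂ) := SeminormedAddGroup.toContinuousENorm
  have hInt : IntegrableOn (fun s => (T s)⁻¹) (Set.Icc (0:ℝ) 1) ν :=
    hc.integrableOn_compact isCompact_Icc
  have hIcc : 0 < ν (Set.Icc (0:ℝ) 1) := by
    by_contra h
    push_neg at h
    have h0 : ν (Set.Icc (0:ℝ) 1) = 0 := le_antisymm h zero_le
    have : ν Set.univ ≤ ν (Set.Icc (0:ℝ) 1) + ν (Set.Icc (0:ℝ) 1)ᶜ := by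
      rw [← Set.union_compl_self (Set.Icc (0:ℝ) 1)]
      exact measure_union_le _ _
    rw [h0, hν, measure_univ] at this
    simp at this
  intro v hv
  let φl : Matrix (Fin n) (Fin n) ℂ →ₗ[ℂ] ℂ :=
    { toFun := fun M => qf M v
      map_add' := fun M N => qf_add M N v
      map_smul' := fun c M => qf_smul c M v }
  let φ : Matrix (Fin n) (Fin n) ℂ →L[ℂ] ℂ := LinearMap.toContinuousLinearMap φl
  set g : ℝ → ℂ := fun s => qf ((T s)⁻¹) v with hg
  have gInt : Integrable g (ν.restrict (Set.Icc (0:ℝ) 1)) := φ.integrable_comp hInt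
  have hφ : qf (matMean ν A B) v = ∫ s in Set.Icc (0:ℝ) 1, g s ∂ν := by
    have h1 : qf (matMean ν A B) v = φ (matMean ν A B) := rfl
    rw [h1, matMean]
    exact (ContinuousLinearMap.integral_comp_comm φ hInt).symm
  have hre : (qf (matMean ν A B) v).re = ∫ s in Set.Icc (0:ℝ) 1, (g s).re ∂ν := by
    rw [hφ, ← RCLike.re_to_complex, ← integral_re gInt]
    rfl
  have him : (qf (matMean ν A B) v).im = ∫ s in Set.Icc (0:ℝ) 1, (g s).im ∂ν := by
    rw [hφ, ← RCLike.im_to_complex, ← integral_im gInt]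
    rfl
  have hgre_pos : ∀ s ∈ Set.Icc (0:ℝ) 1, 0 < (g s).re := fun s hs => (hT s hs v hv).1
  have hgim : ∀ s ∈ Set.Icc (0:ℝ) 1, |(g s).im| ≤ Real.tan α * (g s).re := fun s hs =>
    (hT s hs v hv).2
  have hre_nonneg : 0 ≤ᵐ[ν.restrict (Set.Icc (0:ℝ) 1)] fun s => (g s).re :=
    (ae_restrict_iff' measurableSet_Icc).mpr (ae_of_all _ fun s hs => (hgre_pos s hs).le)
  have hre_pos : 0 < ∫ s in Set.Icc (0:ℝ) 1, (g s).re ∂ν := by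
    rw [setIntegral_pos_iff_support_of_nonneg_ae hre_nonneg gInt.re]
    refine lt_of_lt_of_le hIcc (measure_mono ?_)
    intro s hs
    exact ⟨(hgre_pos s hs).ne', hs⟩
  constructor
  · rw [hre]; exact hre_pos
  · rw [hre, him]
    calc |∫ s in Set.Icc (0:ℝ) 1, (g s).im ∂ν|
        ≤ ∫ s in Set.Icc (0:ℝ) 1, |(g s).im| ∂ν := by
          simpa [Real.norm_eq_abs] using
            norm_integral_le_integral_norm (μ := ν.restrict (Set.Icc (0:ℝ) 1))
              (fun s => (g s).im)
      _ ≤ ∫ s in Set.Icc (0:ℝ) 1, Real.tan α * (g s).re ∂ν := by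
          refine integral_mono_ae gInt.im.abs (gInt.re.const_mul _) ?_
          exact (ae_restrict_iff' measurableSet_Icc).mpr (ae_of_all _ fun s hs => hgim s hs)
      _ = Real.tan α * ∫ s in Set.Icc (0:ℝ) 1, (g s).re ∂ν := integral_const_mul _ _

theorem stmt6 {n : ℕ} (hn : 1 ≤ n) {α : ℝ} (hα0 : 0 ≤ α) (hα : α < Real.pi / 2)
    {A B : Matrix (Fin n) (Fin n) ℂ} (hA : InSector α A) (hB : InSector α B)
    (ν : Measure ℝ) [IsProbabilityMeasure ν] (hν : ν (Set.Icc (0 : ℝ) 1)ᶜ = 0) :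
    InSector α (matMean ν A B) := by
  rw [inSector_iff_sec]
  exact sec_matMean ((inSector_iff_sec α A).mp hA) ((inSector_iff_sec α B).mp hB) ν hν
end

section
/- Let n ≥ 1, 0 ≤ α < π/2, let A ∈ Mₙ(ℂ) satisfy A ∈ S_α, and let ν be a probability measure on [0,1]. Then the matrix f(A) := ∫₀¹ ((1−s)I + sA⁻¹)⁻¹ dν(s) belongs to S_α. -/
open Matrix MeasureTheory
open scoped ComplexOrder

attribute [local instance] Matrix.normedAddCommGroup Matrix.normedSpace

/-- `f(A) = ∫₀¹ ((1-s)I + sA⁻¹)⁻¹ dν(s)`, the operator monotone function associated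
with the probability measure `ν` applied to the matrix `A`. -/
noncomputable def matFun {n : ℕ} (ν : Measure ℝ) (A : Matrix (Fin n) (Fin n) ℂ) :
    Matrix (Fin n) (Fin n) ℂ :=
  ∫ s in Set.Icc (0 : ℝ) 1, ((1 - s) • (1 : Matrix (Fin n) (Fin n) ℂ) + s • A⁻¹)⁻¹ ∂ν

namespace SectAux
variable {n : ℕ}

noncomputable def q (M : Matrix (Fin n) (Fin n) ℂ) (x : EuclideanSpace ℂ (Fin n)) : ℂ :=
  inner ℂ x (Matrix.toEuclideanCLM (𝕜 := ℂ) M x)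

lemma q_eq (M : Matrix (Fin n) (Fin n) ℂ) (v : Fin n → ℂ) :
    q M ((WithLp.equiv 2 _).symm v) = dotProduct (star v) (M *ᵥ v) := by
  simp only [q, WithLp.equiv_symm_apply, Matrix.toEuclideanCLM_toLp, EuclideanSpace.inner_toLp_toLp]
  exact dotProduct_comm _ _

lemma q_eq' (M : Matrix (Fin n) (Fin n) ℂ) (x : EuclideanSpace ℂ (Fin n)) :
    q M x = dotProduct (star (WithLp.equiv 2 _ x)) (M *ᵥ (WithLp.equiv 2 _ x)) := by
  rw [← q_eq]; simp

lemma q_conjTranspose (M : Matrix (Fin n) (Fin n) ℂ) (x : EuclideanSpace ℂ (Fin n)) :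
    q Mᴴ x = starRingEnd ℂ (q M x) := by
  rw [q, q, ← Matrix.star_eq_conjTranspose, map_star, ContinuousLinearMap.star_eq_adjoint,
    ContinuousLinearMap.adjoint_inner_right, ← inner_conj_symm]

lemma q_matRe (M : Matrix (Fin n) (Fin n) ℂ) (x : EuclideanSpace ℂ (Fin n)) :
    q (matRe M) x = ((q M x).re : ℂ) := by
  have h1 : q (M + Mᴴ) x = q M x + q Mᴴ x := by
    simp only [q, map_add, ContinuousLinearMap.add_apply, inner_add_right]
  have h2 : q (matRe M) x = (1/2 : ℂ) * q (M + Mᴴ) x := by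
    simp only [q, matRe, _root_.map_smul, ContinuousLinearMap.smul_apply,
      inner_smul_right, smul_eq_mul]
  rw [h2, h1, q_conjTranspose, Complex.add_conj]
  push_cast
  ring

lemma q_one (x : EuclideanSpace ℂ (Fin n)) : q 1 x = ((‖x‖ : ℂ))^2 := by
  rw [q, _root_.map_one]
  simpa using inner_self_eq_norm_sq_to_K (𝕜 := ℂ) x

/-- The full-vector sector condition. -/
def Sect (α : ℝ) (M : Matrix (Fin n) (Fin n) ℂ) : Prop :=
  ∀ x : EuclideanSpace ℂ (Fin n), x ≠ 0 →
    0 < (q M x).re ∧ |(q M x).im| ≤ Real.tan α * (q M x).re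

lemma Sect.det_ne_zero {α : ℝ} {M : Matrix (Fin n) (Fin n) ℂ} (h : Sect α M) :
    M.det ≠ 0 := by
  intro hdet
  obtain ⟨v, hv, hMv⟩ := (Matrix.exists_mulVec_eq_zero_iff).2 hdet
  set x : EuclideanSpace ℂ (Fin n) := (WithLp.equiv 2 _).symm v with hx
  have hx0 : x ≠ 0 := by
    simpa [hx] using hv
  have := (h x hx0).1
  rw [hx, q_eq, hMv] at this
  simp at this

lemma Sect.isUnit_det {α : ℝ} {M : Matrix (Fin n) (Fin n) ℂ} (h : Sect α M) :
    IsUnit M.det := isUnit_iff_ne_zero.2 h.det_ne_zero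

lemma Sect.inv {α : ℝ} {M : Matrix (Fin n) (Fin n) ℂ} (h : Sect α M) : Sect α M⁻¹ := by
  intro x hx0
  set v := WithLp.equiv 2 _ x with hv
  have hv0 : v ≠ 0 := by
    intro h0
    apply hx0
    have : (WithLp.equiv 2 (Fin n → ℂ)).symm v = 0 := by rw [h0]; rfl
    simpa [hv] using this
  set w := M⁻¹ *ᵥ v with hw
  have hMw : M *ᵥ w = v := by
    rw [hw, Matrix.mulVec_mulVec, Matrix.mul_nonsing_inv _ h.isUnit_det, Matrix.one_mulVec]
  have hw0 : w ≠ 0 := by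
    intro h0
    rw [h0, Matrix.mulVec_zero] at hMw
    exact hv0 hMw.symm
  have key : q M⁻¹ x = starRingEnd ℂ (q M ((WithLp.equiv 2 _).symm w)) := by
    rw [q_eq' , q_eq]
    rw [← hv, ← hw, ← hMw]
    simp only [dotProduct, Pi.star_apply, map_sum, _root_.map_mul, RingHom.id_apply]
    rw [hMw]
    refine Finset.sum_congr rfl fun i _ => ?_
    simp [mul_comm, Matrix.mulVec, dotProduct]
  have hsw : ((WithLp.equiv 2 (Fin n → ℂ)).symm w) ≠ 0 := by
    intro h0
    apply hw0
    simpa using congrArg (WithLp.equiv 2 (Fin n → ℂ)) h0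
  obtain ⟨h1, h2⟩ := h _ hsw
  rw [key]
  constructor
  · simpa using h1
  · simpa using h2

lemma Sect.one {α : ℝ} (ht : 0 ≤ Real.tan α) : Sect α (1 : Matrix (Fin n) (Fin n) ℂ) := by
  intro x hx
  have hn : (0:ℝ) < ‖x‖ := norm_pos_iff.2 hx
  rw [q_one, ← Complex.ofReal_pow, Complex.ofReal_re, Complex.ofReal_im]
  refine ⟨pow_pos hn 2, ?_⟩
  rw [abs_zero]
  positivity

lemma Sect.combo {α s : ℝ} (hs0 : 0 ≤ s) (hs1 : s ≤ 1) (ht : 0 ≤ Real.tan α)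
    {M : Matrix (Fin n) (Fin n) ℂ} (h : Sect α M) :
    Sect α ((1 - s) • (1 : Matrix (Fin n) (Fin n) ℂ) + s • M) := by
  intro x hx
  have hq : q ((1 - s) • (1 : Matrix (Fin n) (Fin n) ℂ) + s • M) x
      = ((1 - s) * ‖x‖^2 : ℝ) + (s:ℂ) * q M x := by
    have hvv := q_one x
    rw [q_eq', Matrix.one_mulVec] at hvv
    rw [q_eq', q_eq', Matrix.add_mulVec, Matrix.smul_mulVec, Matrix.smul_mulVec,
      Matrix.one_mulVec, dotProduct_add, dotProduct_smul, dotProduct_smul,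
      hvv]
    push_cast [Complex.real_smul]
    ring
  obtain ⟨h1, h2⟩ := h x hx
  have hn : (0:ℝ) < ‖x‖ := norm_pos_iff.2 hx
  have hre : (q ((1 - s) • (1 : Matrix (Fin n) (Fin n) ℂ) + s • M) x).re
      = (1 - s) * ‖x‖^2 + s * (q M x).re := by
    rw [hq, Complex.add_re, Complex.ofReal_re, Complex.mul_re, Complex.ofReal_re, Complex.ofReal_im]; ring
  have him : (q ((1 - s) • (1 : Matrix (Fin n) (Fin n) ℂ) + s • M) x).im
      = s * (q M x).im := by
    rw [hq, Complex.add_im, Complex.ofReal_im, Complex.mul_im, Complex.ofReal_re, Complex.ofReal_im]; ring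
  constructor
  · rw [hre]
    rcases lt_or_eq_of_le hs1 with hlt | heq
    · have hp : 0 < (1-s) * ‖x‖^2 := mul_pos (by linarith) (pow_pos hn 2)
      nlinarith [mul_nonneg hs0 h1.le]
    · rw [heq]; simpa using h1
  · rw [hre, him, abs_mul, abs_of_nonneg hs0]
    have : s * |(q M x).im| ≤ s * (Real.tan α * (q M x).re) :=
      mul_le_mul_of_nonneg_left h2 hs0
    nlinarith [mul_nonneg ht (mul_nonneg (by linarith : (0:ℝ) ≤ 1 - s) (sq_nonneg ‖x‖))]

lemma matRe_isHermitian (M : Matrix (Fin n) (Fin n) ℂ) : (matRe M).IsHermitian := by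
  unfold Matrix.IsHermitian matRe
  rw [Matrix.conjTranspose_smul, Matrix.conjTranspose_add, Matrix.conjTranspose_conjTranspose]
  rw [add_comm]
  congr 1
  simp [Complex.ext_iff]

lemma q_smul_real (M : Matrix (Fin n) (Fin n) ℂ) (r : ℝ) (x : EuclideanSpace ℂ (Fin n)) :
    q M (r • x) = (r:ℂ)^2 * q M x := by
  rw [q_eq', q_eq']
  have hv : WithLp.equiv 2 (Fin n → ℂ) (r • x) = r • (WithLp.equiv 2 (Fin n → ℂ) x) := rfl
  rw [hv]
  rw [star_smul, Matrix.mulVec_smul, smul_dotProduct, dotProduct_smul]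
  simp [Complex.real_smul]
  ring

/-- Bridge: positive definiteness of `matRe M`. -/
lemma posDef_matRe_iff (M : Matrix (Fin n) (Fin n) ℂ) :
    (matRe M).PosDef ↔ ∀ x : EuclideanSpace ℂ (Fin n), x ≠ 0 → 0 < (q M x).re := by
  constructor
  · intro h x hx
    have hv : (WithLp.equiv 2 (Fin n → ℂ)) x ≠ 0 := by
      intro h0
      apply hx
      have := congrArg (WithLp.equiv 2 (Fin n → ℂ)).symm h0
      simpa using this
    have := h.dotProduct_mulVec_pos hv
    rw [← q_eq', q_matRe] at this
    exact Complex.zero_lt_real.mp this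
  · intro h
    refine Matrix.PosDef.of_dotProduct_mulVec_pos (matRe_isHermitian M) fun v hv => ?_
    have hx : (WithLp.equiv 2 (Fin n → ℂ)).symm v ≠ 0 := by
      intro h0
      apply hv
      simpa using congrArg (WithLp.equiv 2 (Fin n → ℂ)) h0
    have := h _ hx
    have hq := q_eq (matRe M) v
    rw [q_matRe] at hq
    rw [← hq]
    exact Complex.zero_lt_real.mpr this

lemma inSector_iff_sect {α : ℝ} (ht : 0 ≤ Real.tan α) (M : Matrix (Fin n) (Fin n) ℂ) :
    InSector α M ↔ Sect α M := by
  constructor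
  · rintro ⟨hpd, hsec⟩ x hx
    refine ⟨(posDef_matRe_iff M).1 hpd x hx, ?_⟩
    have hnx : (0:ℝ) < ‖x‖ := norm_pos_iff.2 hx
    set u : EuclideanSpace ℂ (Fin n) := ‖x‖⁻¹ • x with hu
    have hun : ‖u‖ = 1 := by
      rw [hu, norm_smul]
      simp [abs_of_pos (inv_pos.2 hnx), inv_mul_cancel₀ hnx.ne']
    have hxu : x = (‖x‖ : ℝ) • u := by
      rw [hu, smul_smul]
      simp [mul_inv_cancel₀ hnx.ne']
    have hq : q M x = ((‖x‖:ℂ))^2 * q M u := by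
      have := q_smul_real M ‖x‖ u
      rw [← hxu] at this
      exact this
    have h2 := hsec u hun
    have him : (q M x).im = ‖x‖^2 * (q M u).im := by
      rw [hq, Complex.mul_im, ← Complex.ofReal_pow, Complex.ofReal_re, Complex.ofReal_im]
      ring
    have hre2 : (q M x).re = ‖x‖^2 * (q M u).re := by
      rw [hq, Complex.mul_re, ← Complex.ofReal_pow, Complex.ofReal_re, Complex.ofReal_im]
      ring
    rw [him, hre2, abs_mul, abs_of_nonneg (sq_nonneg _)]
    calc ‖x‖^2 * |(q M u).im| ≤ ‖x‖^2 * (Real.tan α * (q M u).re) :=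
          mul_le_mul_of_nonneg_left h2 (sq_nonneg _)
      _ = Real.tan α * (‖x‖^2 * (q M u).re) := by ring
  · intro h
    refine ⟨(posDef_matRe_iff M).2 fun x hx => (h x hx).1, fun x hx => ?_⟩
    have : x ≠ 0 := by intro h0; rw [h0] at hx; simp at hx
    exact (h x this).2

noncomputable def qCLM (x : EuclideanSpace ℂ (Fin n)) :
    Matrix (Fin n) (Fin n) ℂ →L[ℂ] ℂ :=
  LinearMap.toContinuousLinearMap
    { toFun := fun M => q M x
      map_add' := fun M N => by
        simp only [q, map_add, ContinuousLinearMap.add_apply, inner_add_right]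
      map_smul' := fun c M => by
        simp only [q, _root_.map_smul, ContinuousLinearMap.smul_apply, inner_smul_right,
          RingHom.id_apply, smul_eq_mul] }

lemma qCLM_apply (x : EuclideanSpace ℂ (Fin n)) (M : Matrix (Fin n) (Fin n) ℂ) :
    qCLM x M = q M x := rfl

theorem main {α : ℝ} (ht : 0 ≤ Real.tan α) {A : Matrix (Fin n) (Fin n) ℂ}
    (hSA : Sect α A) (ν : Measure ℝ) [IsProbabilityMeasure ν]
    (hν : ν (Set.Icc (0 : ℝ) 1)ᶜ = 0) : Sect α (matFun ν A) := by
  set g : ℝ → Matrix (Fin n) (Fin n) ℂ :=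
    fun s => (1 - s) • (1 : Matrix (Fin n) (Fin n) ℂ) + s • A⁻¹ with hg
  have hSg : ∀ s ∈ Set.Icc (0:ℝ) 1, Sect α ((g s)⁻¹) := fun s hs =>
    ((hSA.inv).combo hs.1 hs.2 ht).inv
  -- continuity
  have hgc : Continuous g := by fun_prop
  have hcont : ContinuousOn (fun s => (g s)⁻¹) (Set.Icc (0:ℝ) 1) := by
    intro s hs
    have hdet : (g s).det ≠ 0 := ((hSA.inv).combo hs.1 hs.2 ht).det_ne_zero
    have h2 : ContinuousAt Ring.inverse ((g s).det) := by
      rw [Ring.inverse_eq_inv']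
      exact continuousAt_inv₀ hdet
    exact (((continuousAt_matrix_inv (g s) h2).comp hgc.continuousAt)).continuousWithinAt
  letI : ContinuousENorm (Matrix (Fin n) (Fin n) ℂ) := SeminormedAddGroup.toContinuousENorm
  have hInt : IntegrableOn (fun s => (g s)⁻¹) (Set.Icc (0:ℝ) 1) ν :=
    hcont.integrableOn_compact isCompact_Icc
  have hIcc1 : (ν (Set.Icc (0:ℝ) 1)).toReal = 1 := by
    have h := measure_add_measure_compl (μ := ν) (measurableSet_Icc (a := (0:ℝ)) (b := 1))
    rw [hν, add_zero, measure_univ] at h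
    rw [h]; simp
  intro x hx
  -- the scalar function
  set F : ℝ → ℂ := fun s => q ((g s)⁻¹) x with hF
  have hFint : IntegrableOn F (Set.Icc (0:ℝ) 1) ν := (qCLM x).integrable_comp hInt
  have hFcont : ContinuousOn F (Set.Icc (0:ℝ) 1) := (qCLM x).continuous.comp_continuousOn hcont
  have hkey : q (matFun ν A) x = ∫ s in Set.Icc (0:ℝ) 1, F s ∂ν := by
    rw [← qCLM_apply, matFun]
    exact (ContinuousLinearMap.integral_comp_comm (qCLM x) hInt).symm
  have hre : (q (matFun ν A) x).re = ∫ s in Set.Icc (0:ℝ) 1, (F s).re ∂ν := by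
    have h := integral_re (𝕜 := ℂ) hFint
    rw [hkey]
    simpa [RCLike.re_to_complex] using h.symm
  have him : (q (matFun ν A) x).im = ∫ s in Set.Icc (0:ℝ) 1, (F s).im ∂ν := by
    have h := integral_im (𝕜 := ℂ) hFint
    rw [hkey]
    simpa [RCLike.im_to_complex] using h.symm
  -- positivity of real part
  have hFreC : ContinuousOn (fun s => (F s).re) (Set.Icc (0:ℝ) 1) :=
    Complex.continuous_re.comp_continuousOn hFcont
  obtain ⟨s₀, hs₀, hmin⟩ := isCompact_Icc.exists_isMinOn (⟨0, by norm_num⟩)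
    hFreC
  have hm : 0 < (F s₀).re := (hSg s₀ hs₀ x hx).1
  have hge : (F s₀).re * (ν (Set.Icc (0:ℝ) 1)).toReal ≤ ∫ s in Set.Icc (0:ℝ) 1, (F s).re ∂ν :=
    by have := setIntegral_ge_of_const_le measurableSet_Icc (measure_ne_top ν _)
          (fun s hs => hmin hs) hFint.re
       rw [measureReal_def, smul_eq_mul, mul_comm] at this
       exact this
  rw [hIcc1, mul_one] at hge
  have hrepos : 0 < (q (matFun ν A) x).re := by rw [hre]; linarith
  refine ⟨hrepos, ?_⟩
  -- imaginary part bound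
  have h1 : |(q (matFun ν A) x).im| ≤ ∫ s in Set.Icc (0:ℝ) 1, |(F s).im| ∂ν := by
    rw [him]
    simpa [Real.norm_eq_abs] using
      norm_integral_le_integral_norm (μ := ν.restrict (Set.Icc 0 1)) (fun s => (F s).im)
  have h2 : ∫ s in Set.Icc (0:ℝ) 1, |(F s).im| ∂ν
      ≤ ∫ s in Set.Icc (0:ℝ) 1, Real.tan α * (F s).re ∂ν := by
    refine setIntegral_mono_on hFint.im.abs (hFint.re.const_mul _) measurableSet_Icc ?_
    exact fun s hs => (hSg s hs x hx).2
  have h3 : ∫ s in Set.Icc (0:ℝ) 1, Real.tan α * (F s).re ∂ν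
      = Real.tan α * (q (matFun ν A) x).re := by
    rw [hre, integral_const_mul]
  linarith

end SectAux

theorem stmt7 {n : ℕ} (hn : 1 ≤ n) {α : ℝ} (hα0 : 0 ≤ α) (hα : α < Real.pi / 2)
    {A : Matrix (Fin n) (Fin n) ℂ} (hA : InSector α A)
    (ν : Measure ℝ) [IsProbabilityMeasure ν] (hν : ν (Set.Icc (0 : ℝ) 1)ᶜ = 0) :
    InSector α (matFun ν A) := by
  have ht : 0 ≤ Real.tan α := Real.tan_nonneg_of_nonneg_of_le_pi_div_two hα0 hα.le
  have hSA : SectAux.Sect α A := (SectAux.inSector_iff_sect ht A).1 hA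
  exact (SectAux.inSector_iff_sect ht _).2 (SectAux.main ht hSA ν hν)
end
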